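/- arXiv:2409.18525 — 2 statements merged into one kernel-verified Lean document; each statement's English description precedes it below -/
import Mathlib

section
/- Let Ω ⊆ ℝⁿ be open, let φ ∈ Φ_w(Ω) satisfy (A0), (A1)_ω and (aInc)_p with p ∈ (1,∞), and let ω ∈ A_p. Then there exists β > 0 such that for every open ball B, a.e. x ∈ B∩Ω, and every measurable f ≥ 0 with ρ_φ^ω(f) ≤ 1 and f(y) ∈ {0} ∪ (1/β₀, ∞) for a.e. y (where β₀ is the constant from (A0)), one has φ(x, (β/|B|)∫_{B∩Ω} f dy)^{1/p} ≤ (2/|B|) ∫_{B∩Ω} φ(y, f(y))^{1/p} dy. -/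
open MeasureTheory Metric Filter Set
open scoped ENNReal NNReal Topology

noncomputable section

/-- `ℝⁿ` with Lebesgue measure. -/
abbrev Rn (n : ℕ) : Type := EuclideanSpace ℝ (Fin n)

/-- The `ω`-measure of a set `E`, `ω(E) = ∫_E ω(x) dx`. -/
def wSet {n : ℕ} (ω : Rn n → ℝ≥0∞) (E : Set (Rn n)) : ℝ≥0∞ := ∫⁻ x in E, ω x

/-- A weight: a measurable, a.e. positive and finite, locally integrable function. -/
def IsWeight {n : ℕ} (ω : Rn n → ℝ≥0∞) : Prop :=
  Measurable ω ∧ (∀ᵐ x ∂(volume : Measure (Rn n)), 0 < ω x ∧ ω x < ∞) ∧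
    ∀ (z : Rn n) (r : ℝ), 0 < r → wSet ω (ball z r) ≠ ∞

/-- The Muckenhoupt class `A_q`, `1 < q < ∞`:
`sup_B |B|^{-q} ω(B) (∫_B ω^{-q'/q})^{q-1} < ∞` where `q'/q = 1/(q-1)`. -/
def MuckenhouptAq {n : ℕ} (q : ℝ) (ω : Rn n → ℝ≥0∞) : Prop :=
  IsWeight ω ∧ ∃ C : ℝ≥0∞, C ≠ ∞ ∧ ∀ (z : Rn n) (r : ℝ), 0 < r →
    (volume (ball z r)) ^ (-q) * wSet ω (ball z r) *
      (∫⁻ y in ball z r, (ω y) ^ (-(1 / (q - 1)))) ^ (q - 1) ≤ C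

/-- The class `A_∞ = ⋃_{1<q<∞} A_q`. -/
def MuckenhouptAinfty {n : ℕ} (ω : Rn n → ℝ≥0∞) : Prop :=
  ∃ q : ℝ, 1 < q ∧ MuckenhouptAq q ω

/-- `(aInc)_p`: `t ↦ φ(x,t)/t^p` is almost increasing, uniformly in a.e. `x ∈ Ω`. -/
def AInc {n : ℕ} (Ω : Set (Rn n)) (φ : Rn n → ℝ≥0∞ → ℝ≥0∞) (p : ℝ) : Prop :=
  ∃ a : ℝ≥0, 1 ≤ a ∧ ∀ᵐ x ∂(volume : Measure (Rn n)), x ∈ Ω →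
    ∀ s t : ℝ≥0, 0 < s → s < t →
      φ x s / (s : ℝ≥0∞) ^ p ≤ a * (φ x t / (t : ℝ≥0∞) ^ p)

/-- A weak Φ-function on `Ω`. -/
structure IsWeakPhi {n : ℕ} (Ω : Set (Rn n)) (φ : Rn n → ℝ≥0∞ → ℝ≥0∞) : Prop where
  meas : ∀ f : Rn n → ℝ≥0∞, Measurable f → Measurable fun x => φ x (f x)
  mono : ∀ᵐ x ∂(volume : Measure (Rn n)), x ∈ Ω → Monotone (φ x)
  map_zero : ∀ᵐ x ∂(volume : Measure (Rn n)), x ∈ Ω → φ x 0 = 0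
  tendsto_zero : ∀ᵐ x ∂(volume : Measure (Rn n)), x ∈ Ω →
    Tendsto (fun t : ℝ≥0 => φ x t) (𝓝[>] 0) (𝓝 0)
  tendsto_top : ∀ᵐ x ∂(volume : Measure (Rn n)), x ∈ Ω →
    Tendsto (fun t : ℝ≥0 => φ x t) atTop (𝓝 ∞)
  aInc_one : AInc Ω φ 1

/-- Condition (A0). -/
def A0 {n : ℕ} (Ω : Set (Rn n)) (φ : Rn n → ℝ≥0∞ → ℝ≥0∞) : Prop :=
  ∃ β₀ : ℝ≥0, 0 < β₀ ∧ β₀ ≤ 1 ∧ ∀ᵐ x ∂(volume : Measure (Rn n)), x ∈ Ω →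
    φ x β₀ ≤ 1 ∧ 1 ≤ φ x ((β₀ : ℝ≥0∞)⁻¹)

/-- Condition (A1)_ω. -/
def A1w {n : ℕ} (Ω : Set (Rn n)) (ω : Rn n → ℝ≥0∞) (φ : Rn n → ℝ≥0∞ → ℝ≥0∞) : Prop :=
  ∃ β₁ : ℝ≥0, 0 < β₁ ∧ β₁ ≤ 1 ∧ ∀ (z : Rn n) (r : ℝ), 0 < r → wSet ω (ball z r) ≤ 1 →
    ∀ᵐ x ∂(volume : Measure (Rn n)), ∀ᵐ y ∂(volume : Measure (Rn n)),
      x ∈ ball z r ∩ Ω → y ∈ ball z r ∩ Ω →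
        ∀ t : ℝ≥0, 1 ≤ φ y t → φ y t ≤ (wSet ω (ball z r))⁻¹ →
          φ x (β₁ * t) ≤ φ y t

/-- `h ∈ L¹(Ω,ω) ∩ L^∞(Ω)`, `h ≥ 0`. -/
def MemL1wLinf {n : ℕ} (Ω : Set (Rn n)) (ω : Rn n → ℝ≥0∞) (h : Rn n → ℝ≥0) : Prop :=
  Measurable h ∧ (∫⁻ x in Ω, (h x : ℝ≥0∞) * ω x) ≠ ∞ ∧
    ∃ C : ℝ≥0, ∀ᵐ x ∂(volume : Measure (Rn n)), x ∈ Ω → h x ≤ C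

/-- Condition (A2)_ω. -/
def A2w {n : ℕ} (Ω : Set (Rn n)) (ω : Rn n → ℝ≥0∞) (φ : Rn n → ℝ≥0∞ → ℝ≥0∞) : Prop :=
  ∀ s : ℝ≥0, 0 < s → ∃ β₂ : ℝ≥0, 0 < β₂ ∧ β₂ ≤ 1 ∧ ∃ h : Rn n → ℝ≥0,
    MemL1wLinf Ω ω h ∧
      ∀ᵐ x ∂(volume : Measure (Rn n)), ∀ᵐ y ∂(volume : Measure (Rn n)),
        x ∈ Ω → y ∈ Ω → ∀ t : ℝ≥0, φ y t ≤ s →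
          φ x (β₂ * t) ≤ φ y t + h x + h y

/-- The weighted modular `ρ_φ^ω(g) = ∫_Ω φ(x, g(x)) ω(x) dx` (applied to `g = |f|`). -/
def wModular {n : ℕ} (Ω : Set (Rn n)) (ω : Rn n → ℝ≥0∞) (φ : Rn n → ℝ≥0∞ → ℝ≥0∞)
    (g : Rn n → ℝ≥0∞) : ℝ≥0∞ := ∫⁻ x in Ω, φ x (g x) * ω x

/-- The weighted Luxemburg norm `‖f‖_{L^φ(Ω,ω)}` (applied to `g = |f|`). -/
def wNorm {n : ℕ} (Ω : Set (Rn n)) (ω : Rn n → ℝ≥0∞) (φ : Rn n → ℝ≥0∞ → ℝ≥0∞)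
    (g : Rn n → ℝ≥0∞) : ℝ≥0∞ :=
  ⨅ (lam : ℝ≥0) (_ : 0 < lam)
    (_ : wModular Ω ω φ (fun x => g x / lam) ≤ 1), (lam : ℝ≥0∞)

/-- Membership in the weighted generalized Orlicz space `L^φ(Ω,ω)` (applied to `g = |f|`). -/
def MemLw {n : ℕ} (Ω : Set (Rn n)) (ω : Rn n → ℝ≥0∞) (φ : Rn n → ℝ≥0∞ → ℝ≥0∞)
    (g : Rn n → ℝ≥0∞) : Prop :=
  ∃ lam : ℝ≥0, 0 < lam ∧ wModular Ω ω φ (fun x => g x / lam) ≤ 1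

/-- The Hardy–Littlewood maximal operator (relative to `Ω`), applied to `g = |f|`. -/
def maximal {n : ℕ} (Ω : Set (Rn n)) (g : Rn n → ℝ≥0∞) (x : Rn n) : ℝ≥0∞ :=
  ⨆ (z : Rn n) (r : ℝ) (_ : 0 < r) (_ : x ∈ ball z r),
    (volume (ball z r))⁻¹ * ∫⁻ y in ball z r ∩ Ω, g y

/-- An `x`-independent weak Φ-function. -/
structure IsWeakPhi0 (ψ : ℝ≥0∞ → ℝ≥0∞) : Prop where
  mono : Monotone ψ
  map_zero : ψ 0 = 0
  tendsto_zero : Tendsto (fun t : ℝ≥0 => ψ t) (𝓝[>] 0) (𝓝 0)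
  tendsto_top : Tendsto (fun t : ℝ≥0 => ψ t) atTop (𝓝 ∞)
  aInc_one : ∃ a : ℝ≥0, 1 ≤ a ∧ ∀ s t : ℝ≥0, 0 < s → s < t →
    ψ s / (s : ℝ≥0∞) ≤ a * (ψ t / (t : ℝ≥0∞))

/-- The real-valued reciprocal `1/p(x)` of an exponent `p : Ω → [1,∞]` (with `1/∞ = 0`). -/
def invExp {n : ℕ} (p : Rn n → ℝ≥0∞) (x : Rn n) : ℝ := ((p x)⁻¹).toReal

/-- Local log-Hölder continuity of `g` on `Ω`. -/
def LocallyLogHolder {n : ℕ} (Ω : Set (Rn n)) (g : Rn n → ℝ) : Prop :=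
  ∃ c : ℝ, 0 < c ∧ ∀ x ∈ Ω, ∀ y ∈ Ω,
    |g x - g y| ≤ c / Real.log (Real.exp 1 + 1 / dist x y)

/-- The log-Hölder decay condition for `g` with limit `g∞`. -/
def LogHolderDecay {n : ℕ} (Ω : Set (Rn n)) (g : Rn n → ℝ) (ginf : ℝ) : Prop :=
  ∃ c : ℝ, 0 < c ∧ ∀ x ∈ Ω, |g x - ginf| ≤ c / Real.log (Real.exp 1 + ‖x‖)

/-- `1/p ∈ P^log(Ω)`: local log-Hölder continuity plus log-Hölder decay. -/
def PLog {n : ℕ} (Ω : Set (Rn n)) (p : Rn n → ℝ≥0∞) : Prop :=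
  LocallyLogHolder Ω (invExp p) ∧
    ∃ pinf : ℝ≥0∞, 1 ≤ pinf ∧ LogHolderDecay Ω (invExp p) ((pinf)⁻¹).toReal

/-- The variable exponent Φ-function `φ(x,t) = t^{p(x)}`, with
`t^∞ := ∞·χ_{(1,∞)}(t)`. -/
def varExp {n : ℕ} (p : Rn n → ℝ≥0∞) (x : Rn n) (t : ℝ≥0∞) : ℝ≥0∞ :=
  if p x = ∞ then (if t ≤ 1 then 0 else ∞) else t ^ (p x).toReal

/-- The double phase functional `φ(x,t) = t^p + a(x) t^q`. -/
def doublePhase {n : ℕ} (a : Rn n → ℝ) (p q : ℝ) (x : Rn n) (t : ℝ≥0∞) : ℝ≥0∞ :=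
  t ^ p + ENNReal.ofReal (a x) * t ^ q
section KeyEstimateAux

private lemma keyAux_rpow_rpow_inv {p : ℝ} (hp : 0 < p) (x : ℝ≥0∞) : (x ^ p) ^ (1 / p) = x := by
  rw [← ENNReal.rpow_mul, mul_one_div, div_self hp.ne', ENNReal.rpow_one]

private lemma keyAux_rpow_inv_rpow {p : ℝ} (hp : 0 < p) (x : ℝ≥0∞) : (x ^ (1 / p)) ^ p = x := by
  rw [← ENNReal.rpow_mul, one_div_mul_cancel hp.ne', ENNReal.rpow_one]

private lemma keyAux_div_ineq_mul {φs φt A sp tp : ℝ≥0∞} (hsp0 : sp ≠ 0) (hsp : sp ≠ ∞)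
    (htp0 : tp ≠ 0) (htp : tp ≠ ∞)
    (h : φs / sp ≤ A * (φt / tp)) : φs * tp ≤ A * φt * sp := by
  have h1 : φs = φs / sp * sp := (ENNReal.div_mul_cancel hsp0 hsp).symm
  calc φs * tp = φs / sp * sp * tp := by rw [← h1]
    _ ≤ A * (φt / tp) * sp * tp := by gcongr
    _ = A * (φt / tp * tp) * sp := by ring
    _ = A * φt * sp := by rw [ENNReal.div_mul_cancel htp0 htp]

private lemma keyAux_phi_top {g : ℝ≥0∞ → ℝ≥0∞} (hmono : Monotone g)
    (htop : Filter.Tendsto (fun t : ℝ≥0 => g t) Filter.atTop (𝓝 (⊤ : ℝ≥0∞))) : g ⊤ = ⊤ := by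
  by_contra h
  obtain ⟨t, ht⟩ := (htop.eventually (Ioi_mem_nhds (lt_top_iff_ne_top.mpr h))).exists
  exact absurd (hmono (le_top : ((t : ℝ≥0) : ℝ≥0∞) ≤ ⊤)) (not_le.mpr ht)

end KeyEstimateAux

set_option maxHeartbeats 2000000 in
/-- Key estimate for the part of `f` with large values. -/
theorem key_estimate_large_part
    (n : ℕ) (Ω : Set (Rn n)) (hΩ : IsOpen Ω)
    (φ : Rn n → ℝ≥0∞ → ℝ≥0∞) (ω : Rn n → ℝ≥0∞) (p : ℝ) (hp1 : 1 < p)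
    (hφ : IsWeakPhi Ω φ)
    (β₀ : ℝ≥0) (hβ₀pos : 0 < β₀) (hβ₀le : β₀ ≤ 1)
    (hA0 : ∀ᵐ x ∂(volume : Measure (Rn n)), x ∈ Ω →
      φ x β₀ ≤ 1 ∧ 1 ≤ φ x ((β₀ : ℝ≥0∞)⁻¹))
    (hA1 : A1w Ω ω φ) (hInc : AInc Ω φ p) (hω : MuckenhouptAq p ω) :
    ∃ β : ℝ≥0, 0 < β ∧ ∀ f : Rn n → ℝ≥0∞, Measurable f →
      wModular Ω ω φ f ≤ 1 →
      (∀ᵐ y ∂(volume : Measure (Rn n)), f y = 0 ∨ (β₀ : ℝ≥0∞)⁻¹ < f y) →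
        ∀ (z : Rn n) (r : ℝ), 0 < r →
          ∀ᵐ x ∂(volume : Measure (Rn n)), x ∈ ball z r ∩ Ω →
            (φ x ((β : ℝ≥0∞) * (volume (ball z r))⁻¹ *
                ∫⁻ y in ball z r ∩ Ω, f y)) ^ (1 / p) ≤
              2 * (volume (ball z r))⁻¹ *
                ∫⁻ y in ball z r ∩ Ω, (φ y (f y)) ^ (1 / p) := by
  classical
  obtain ⟨a, ha1, haInc⟩ := hInc
  obtain ⟨β₁, hβ₁pos, hβ₁le, hA1'⟩ := hA1
  obtain ⟨⟨hωmeas, hωae, hωfin⟩, C, hCtop, hC⟩ := hω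
  have hp0 : (0 : ℝ) < p := lt_trans one_pos hp1
  have hps : p ≠ 0 := hp0.ne'
  have hp0' : (0 : ℝ) < 1 / p := by positivity
  have ha0 : a ≠ 0 := (lt_of_lt_of_le one_pos ha1).ne'
  have hβ₀0 : β₀ ≠ 0 := hβ₀pos.ne'
  have hβ₁0 : β₁ ≠ 0 := hβ₁pos.ne'
  -- constants
  set C'' : ℝ≥0 := max C.toNNReal 1 with hC''def
  have hC''1 : (1 : ℝ≥0) ≤ C'' := le_max_right _ _
  have hC''0 : C'' ≠ 0 := fun h => by simp [h] at hC''1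
  have hCle : C ≤ (C'' : ℝ≥0∞) := by
    conv_lhs => rw [← ENNReal.coe_toNNReal hCtop]
    exact ENNReal.coe_le_coe.mpr (le_max_left _ _)
  set κ : ℝ≥0 := a ^ (1 / p) * β₀⁻¹ with hκdef
  set K : ℝ≥0 := (a * C'') ^ (1 / p) * β₀⁻¹ with hKdef
  set D : ℝ≥0 := (β₀ * β₀)⁻¹ * β₁⁻¹ with hDdef
  have hκ0 : κ ≠ 0 := by
    apply mul_ne_zero _ (inv_ne_zero hβ₀0)
    simp [NNReal.rpow_eq_zero_iff, ha0]
  have hK0 : K ≠ 0 := by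
    apply mul_ne_zero _ (inv_ne_zero hβ₀0)
    simp [NNReal.rpow_eq_zero_iff, ha0, hC''0]
  have hD0 : D ≠ 0 :=
    mul_ne_zero (inv_ne_zero (mul_ne_zero hβ₀0 hβ₀0)) (inv_ne_zero hβ₁0)
  set β : ℝ≥0 := min (min ((κ * κ)⁻¹) (β₀ * K⁻¹)) (4 * K * D)⁻¹ with hβdef
  have hβpos : 0 < β := by
    rw [hβdef]
    apply lt_min (lt_min _ _) _
    · exact pos_iff_ne_zero.mpr (inv_ne_zero (mul_ne_zero hκ0 hκ0))
    · exact mul_pos hβ₀pos (pos_iff_ne_zero.mpr (inv_ne_zero hK0))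
    · exact pos_iff_ne_zero.mpr (inv_ne_zero (by positivity))
  have hβκκ : β * (κ * κ) ≤ 1 := by
    calc β * (κ * κ) ≤ (κ * κ)⁻¹ * (κ * κ) := by
          gcongr
          exact le_trans (min_le_left _ _) (min_le_left _ _)
      _ = 1 := inv_mul_cancel₀ (mul_ne_zero hκ0 hκ0)
  have hβKβ₀ : β * K * β₀⁻¹ ≤ 1 := by
    calc β * K * β₀⁻¹ ≤ β₀ * K⁻¹ * K * β₀⁻¹ := by
          gcongr
          exact le_trans (min_le_left _ _) (min_le_right _ _)
      _ = K⁻¹ * K * (β₀ * β₀⁻¹) := by ring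
      _ = 1 := by rw [inv_mul_cancel₀ hK0, mul_inv_cancel₀ hβ₀0, one_mul]
  have hKDβ0 : (0 : ℝ≥0) < K * D * β :=
    mul_pos (mul_pos (pos_iff_ne_zero.mpr hK0) (pos_iff_ne_zero.mpr hD0)) hβpos
  have h4KD0 : (4 : ℝ≥0) * K * D ≠ 0 :=
    mul_ne_zero (mul_ne_zero (by norm_num) hK0) hD0
  have hβKD : 2 * K * D * β < 1 := by
    calc 2 * K * D * β = 2 * (K * D * β) := by ring
      _ < 4 * (K * D * β) := mul_lt_mul_of_pos_right (by norm_num) hKDβ0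
      _ = 4 * K * D * β := by ring
      _ ≤ 4 * K * D * (4 * K * D)⁻¹ := by
          gcongr
          exact min_le_right _ _
      _ = 1 := mul_inv_cancel₀ h4KD0
  refine ⟨β, hβpos, ?_⟩
  intro f hf hρ hf0 z r hr
  have hρ' : (∫⁻ y in Ω, φ y (f y) * ω y) ≤ 1 := hρ
  set V : ℝ≥0∞ := volume (ball z r) with hVdef
  set W : ℝ≥0∞ := wSet ω (ball z r) with hWdef
  set J : ℝ≥0∞ := ∫⁻ y in ball z r ∩ Ω, f y with hJdef
  set Φ : ℝ≥0∞ := ∫⁻ y in ball z r ∩ Ω, φ y (f y) ^ (1 / p) with hΦdef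
  set M : ℝ≥0∞ := V⁻¹ * Φ with hMdef
  have hV0 : V ≠ 0 := (measure_ball_pos volume z hr).ne'
  have hVtop : V ≠ ⊤ := measure_ball_lt_top.ne
  have hWtop : W ≠ ⊤ := hωfin z r hr
  have hW' : W = ∫⁻ y in ball z r, ω y := rfl
  have hW0 : W ≠ 0 := by
    intro h0
    rw [hW'] at h0
    have h1 : ∀ᵐ y ∂(volume.restrict (ball z r)), ω y = 0 :=
      (lintegral_eq_zero_iff hωmeas).mp h0
    have h2 : ∀ᵐ y ∂(volume.restrict (ball z r)), 0 < ω y :=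
      ae_restrict_of_ae (hωae.mono fun y hy => hy.1)
    have h3 : ∀ᵐ _y ∂(volume.restrict (ball z r)), False := by
      filter_upwards [h1, h2] with y hy1 hy2
      exact hy2.ne' hy1
    rw [ae_iff] at h3
    simp only [not_false_eq_true, setOf_true, Measure.restrict_apply_univ] at h3
    exact (measure_ball_pos volume z hr).ne' h3
  clear_value V W J Φ M
  -- basic power facts
  have hpow_ne : ∀ u : ℝ≥0∞, u ≠ 0 → u ^ p ≠ 0 ∧ (u ≠ ⊤ → u ^ p ≠ ⊤) := by
    intro u hu
    constructor
    · simp [ENNReal.rpow_eq_zero_iff, hu, hp0, not_lt.mpr hp0.le]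
    · intro ht; exact ENNReal.rpow_ne_top_of_nonneg hp0.le ht
  -- cast facts
  have hκE : (κ : ℝ≥0∞) = (a : ℝ≥0∞) ^ (1 / p) * ((β₀ : ℝ≥0∞))⁻¹ := by
    rw [hκdef, ENNReal.coe_mul, ENNReal.coe_rpow_of_ne_zero ha0, ENNReal.coe_inv hβ₀0]
  have hKE : (K : ℝ≥0∞) = ((a : ℝ≥0∞) * (C'' : ℝ≥0∞)) ^ (1 / p) * ((β₀ : ℝ≥0∞))⁻¹ := by
    rw [hKdef, ENNReal.coe_mul, ENNReal.coe_rpow_of_ne_zero (mul_ne_zero ha0 hC''0),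
      ENNReal.coe_mul, ENNReal.coe_inv hβ₀0]
  have hDE : (D : ℝ≥0∞) = (((β₀ : ℝ≥0∞)) * ((β₀ : ℝ≥0∞)))⁻¹ * ((β₁ : ℝ≥0∞))⁻¹ := by
    rw [hDdef, ENNReal.coe_mul, ENNReal.coe_inv (mul_ne_zero hβ₀0 hβ₀0),
      ENNReal.coe_inv hβ₁0, ENNReal.coe_mul]
  have hβ₀invtop : ((β₀ : ℝ≥0∞))⁻¹ ≠ ⊤ := ENNReal.inv_ne_top.mpr (by exact_mod_cast hβ₀0)
  have hβ₀inv1 : (1 : ℝ≥0∞) ≤ ((β₀ : ℝ≥0∞))⁻¹ := by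
    rw [ENNReal.one_le_inv]
    exact_mod_cast hβ₀le
  have haE1 : (1 : ℝ≥0∞) ≤ (a : ℝ≥0∞) ^ (1 / p) := by
    calc (1 : ℝ≥0∞) = 1 ^ (1 / p) := (ENNReal.one_rpow _).symm
      _ ≤ (a : ℝ≥0∞) ^ (1 / p) := ENNReal.rpow_le_rpow (by exact_mod_cast ha1) hp0'.le
  have haK : (a : ℝ≥0∞) ^ (1 / p) ≤ (K : ℝ≥0∞) := by
    rw [hKE]
    calc (a : ℝ≥0∞) ^ (1 / p) ≤ ((a : ℝ≥0∞) * (C'' : ℝ≥0∞)) ^ (1 / p) := by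
          apply ENNReal.rpow_le_rpow _ hp0'.le
          calc (a : ℝ≥0∞) = (a : ℝ≥0∞) * 1 := (mul_one _).symm
            _ ≤ (a : ℝ≥0∞) * (C'' : ℝ≥0∞) := by gcongr; exact_mod_cast hC''1
      _ = ((a : ℝ≥0∞) * (C'' : ℝ≥0∞)) ^ (1 / p) * 1 := (mul_one _).symm
      _ ≤ _ := by gcongr
  have haCK : ((a : ℝ≥0∞) * (C'' : ℝ≥0∞)) ^ (1 / p) ≤ (K : ℝ≥0∞) := by
    rw [hKE]
    calc ((a : ℝ≥0∞) * (C'' : ℝ≥0∞)) ^ (1 / p)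
        = ((a : ℝ≥0∞) * (C'' : ℝ≥0∞)) ^ (1 / p) * 1 := (mul_one _).symm
      _ ≤ _ := by gcongr
  have hK1 : (1 : ℝ≥0∞) ≤ (K : ℝ≥0∞) := le_trans haE1 haK
  -- measurability
  have hφf : Measurable fun y => φ y (f y) := hφ.meas f hf
  have hmeasBΩ : MeasurableSet (ball z r ∩ Ω) := measurableSet_ball.inter hΩ.measurableSet
  -- the a.e. bundle of pointwise facts
  have hbundle : ∀ᵐ y ∂(volume : Measure (Rn n)),
      (y ∈ Ω → Monotone (φ y)) ∧ (y ∈ Ω → φ y 0 = 0) ∧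
        (y ∈ Ω → φ y β₀ ≤ 1 ∧ 1 ≤ φ y ((β₀ : ℝ≥0∞))⁻¹) ∧
        (y ∈ Ω → ∀ s t : ℝ≥0, 0 < s → s < t →
          φ y s / (s : ℝ≥0∞) ^ p ≤ a * (φ y t / (t : ℝ≥0∞) ^ p)) ∧
        (f y = 0 ∨ ((β₀ : ℝ≥0∞))⁻¹ < f y) ∧
        (y ∈ Ω → Tendsto (fun t : ℝ≥0 => φ y t) atTop (𝓝 ⊤)) := by
    filter_upwards [hφ.mono, hφ.map_zero, hA0, haInc, hf0, hφ.tendsto_top] with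
      y h1 h2 h3 h4 h5 h6
    exact ⟨h1, h2, h3, h4, h5, h6⟩
  -- F1 : f y ≤ κ φ(y, f y)^{1/p}
  have hF1 : ∀ᵐ y ∂(volume : Measure (Rn n)), y ∈ Ω →
      f y ≤ (κ : ℝ≥0∞) * φ y (f y) ^ (1 / p) := by
    filter_upwards [hbundle] with y hy hyΩ
    obtain ⟨hmono, hzero, hA0y, hincy, hf0y, htopy⟩ := hy
    rcases hf0y with h0 | hbig
    · simp [h0]
    · have hβinv : ((β₀ : ℝ≥0∞))⁻¹ = ((β₀⁻¹ : ℝ≥0) : ℝ≥0∞) := (ENNReal.coe_inv hβ₀0).symm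
      rcases eq_top_or_lt_top (f y) with htopf | hltf
      · rw [htopf, keyAux_phi_top (hmono hyΩ) (htopy hyΩ), ENNReal.top_rpow_of_pos hp0',
          ENNReal.mul_top (by exact_mod_cast hκ0)]
      · set t : ℝ≥0 := (f y).toNNReal with htdef
        have hft : f y = (t : ℝ≥0∞) := (ENNReal.coe_toNNReal hltf.ne).symm
        have hbt : β₀⁻¹ < t := by
          rw [hft, hβinv, ENNReal.coe_lt_coe] at hbig
          exact hbig
        have ht0 : (0 : ℝ≥0) < t := lt_trans (by positivity) hbt
        have h1 := hincy hyΩ β₀⁻¹ t (by positivity) hbt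
        have h2 := keyAux_div_ineq_mul
          (hpow_ne _ (by exact_mod_cast inv_ne_zero hβ₀0)).1
          ((hpow_ne _ (by exact_mod_cast inv_ne_zero hβ₀0)).2 ENNReal.coe_ne_top)
          (hpow_ne _ (by exact_mod_cast ht0.ne')).1
          ((hpow_ne _ (by exact_mod_cast ht0.ne')).2 ENNReal.coe_ne_top) h1
        have h3 : (t : ℝ≥0∞) ^ p ≤ (a : ℝ≥0∞) * φ y ((t : ℝ≥0∞)) * (((β₀ : ℝ≥0∞))⁻¹) ^ p := by
          calc (t : ℝ≥0∞) ^ p = 1 * (t : ℝ≥0∞) ^ p := (one_mul _).symm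
            _ ≤ φ y (((β₀⁻¹ : ℝ≥0) : ℝ≥0∞)) * (t : ℝ≥0∞) ^ p := by
                gcongr
                rw [← hβinv]
                exact (hA0y hyΩ).2
            _ ≤ (a : ℝ≥0∞) * φ y ((t : ℝ≥0∞)) * (((β₀⁻¹ : ℝ≥0) : ℝ≥0∞)) ^ p := h2
            _ = (a : ℝ≥0∞) * φ y ((t : ℝ≥0∞)) * (((β₀ : ℝ≥0∞))⁻¹) ^ p := by rw [← hβinv]
        have h4 := ENNReal.rpow_le_rpow h3 hp0'.le
        rw [keyAux_rpow_rpow_inv hp0, ENNReal.mul_rpow_of_nonneg _ _ hp0'.le,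
          ENNReal.mul_rpow_of_nonneg _ _ hp0'.le, keyAux_rpow_rpow_inv hp0] at h4
        rw [hft, hκE]
        calc (t : ℝ≥0∞) ≤ (a : ℝ≥0∞) ^ (1 / p) * φ y ((t : ℝ≥0∞)) ^ (1 / p) *
              ((β₀ : ℝ≥0∞))⁻¹ := h4
          _ = (a : ℝ≥0∞) ^ (1 / p) * ((β₀ : ℝ≥0∞))⁻¹ * φ y ((t : ℝ≥0∞)) ^ (1 / p) := by ring
  -- F1 power version with weight
  have hF1p : ∀ᵐ y ∂(volume : Measure (Rn n)), y ∈ Ω →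
      f y ^ p * ω y ≤ (κ : ℝ≥0∞) ^ p * (φ y (f y) * ω y) := by
    filter_upwards [hF1] with y h1 hyΩ
    have h2 := ENNReal.rpow_le_rpow (h1 hyΩ) hp0.le
    rw [ENNReal.mul_rpow_of_nonneg _ _ hp0.le, keyAux_rpow_inv_rpow hp0] at h2
    calc f y ^ p * ω y ≤ (κ : ℝ≥0∞) ^ p * φ y (f y) * ω y := by gcongr
      _ = (κ : ℝ≥0∞) ^ p * (φ y (f y) * ω y) := by rw [mul_assoc]
  -- κ^p computation
  have hκp : (κ : ℝ≥0∞) ^ p = (a : ℝ≥0∞) * (((β₀ : ℝ≥0∞))⁻¹) ^ p := by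
    rw [hκE, ENNReal.mul_rpow_of_nonneg _ _ hp0.le, keyAux_rpow_inv_rpow hp0]
  -- the A_p constant bound for the ball
  have hq : p.HolderConjugate (p / (p - 1)) := Real.HolderConjugate.conjExponent hp1
  have hSigB : (∫⁻ y in ball z r, ω y ^ (-(1 / (p - 1)))) ^ (p - 1) ≤
      (C'' : ℝ≥0∞) * V ^ p * W⁻¹ := by
    have h := hC z r hr
    rw [← hVdef, ← hWdef, ENNReal.rpow_neg] at h
    have hVp0 : V ^ p ≠ 0 := (hpow_ne V hV0).1
    have hVpt : V ^ p ≠ ⊤ := (hpow_ne V hV0).2 hVtop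
    calc (∫⁻ y in ball z r, ω y ^ (-(1 / (p - 1)))) ^ (p - 1)
        = (V ^ p * W⁻¹) * ((V ^ p)⁻¹ * W *
            (∫⁻ y in ball z r, ω y ^ (-(1 / (p - 1)))) ^ (p - 1)) := by
          rw [show (V ^ p * W⁻¹) * ((V ^ p)⁻¹ * W *
              (∫⁻ y in ball z r, ω y ^ (-(1 / (p - 1)))) ^ (p - 1)) =
              (V ^ p * (V ^ p)⁻¹) * (W⁻¹ * W) *
              (∫⁻ y in ball z r, ω y ^ (-(1 / (p - 1)))) ^ (p - 1) from by ring,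
            ENNReal.mul_inv_cancel hVp0 hVpt, ENNReal.inv_mul_cancel hW0 hWtop,
            one_mul, one_mul]
      _ ≤ (V ^ p * W⁻¹) * C := by gcongr
      _ ≤ (V ^ p * W⁻¹) * (C'' : ℝ≥0∞) := by gcongr
      _ = (C'' : ℝ≥0∞) * V ^ p * W⁻¹ := by ring
  -- weighted Hölder inequality on subsets of the ball
  have holder : ∀ A : Set (Rn n), A ⊆ ball z r → ∀ G : ℝ≥0∞,
      (∫⁻ y in A, f y ^ p * ω y) ≤ G →
      (∫⁻ y in A, f y) ≤ G ^ (1 / p) * ((C'' : ℝ≥0∞) * V ^ p * W⁻¹) ^ (1 / p) := by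
    intro A hAB G hG
    have hmeas1 : AEMeasurable (fun y => f y * ω y ^ (1 / p)) (volume.restrict A) :=
      (hf.mul (hωmeas.pow_const _)).aemeasurable
    have hmeas2 : AEMeasurable (fun y => ω y ^ (-(1 / p))) (volume.restrict A) :=
      (hωmeas.pow_const _).aemeasurable
    have key := ENNReal.lintegral_mul_le_Lp_mul_Lq (volume.restrict A) hq hmeas1 hmeas2
    have e1 : ∀ᵐ y ∂(volume.restrict A),
        ((fun y => f y * ω y ^ (1 / p)) * fun y => ω y ^ (-(1 / p))) y = f y := by
      filter_upwards [ae_restrict_of_ae hωae] with y hy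
      simp only [Pi.mul_apply]
      rw [mul_assoc, ← ENNReal.rpow_add _ _ hy.1.ne' hy.2.ne, add_neg_cancel,
        ENNReal.rpow_zero, mul_one]
    rw [lintegral_congr_ae e1] at key
    have e2 : (∫⁻ y in A, (f y * ω y ^ (1 / p)) ^ p) = ∫⁻ y in A, f y ^ p * ω y := by
      apply lintegral_congr fun y => ?_
      rw [ENNReal.mul_rpow_of_nonneg _ _ hp0.le, ← ENNReal.rpow_mul,
        one_div_mul_cancel hps, ENNReal.rpow_one]
    have e3 : (∫⁻ y in A, (ω y ^ (-(1 / p))) ^ (p / (p - 1))) =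
        ∫⁻ y in A, ω y ^ (-(1 / (p - 1))) := by
      apply lintegral_congr fun y => ?_
      rw [← ENNReal.rpow_mul]
      congr 1
      have hp1' : p - 1 ≠ 0 := by
        intro h
        have : p = 1 := by linarith
        exact absurd this (ne_of_gt hp1)
      field_simp
    rw [e2, e3] at key
    have e4 : (∫⁻ y in A, ω y ^ (-(1 / (p - 1)))) ^ (1 / (p / (p - 1))) ≤
        ((C'' : ℝ≥0∞) * V ^ p * W⁻¹) ^ (1 / p) := by
      have h5 : (∫⁻ y in A, ω y ^ (-(1 / (p - 1)))) ≤
          ∫⁻ y in ball z r, ω y ^ (-(1 / (p - 1))) := lintegral_mono_set hAB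
      have h6 : (1 : ℝ) / (p / (p - 1)) = (p - 1) * (1 / p) := by
        have hp1' : p - 1 ≠ 0 := by
          intro h
          have : p = 1 := by linarith
          exact absurd this (ne_of_gt hp1)
        field_simp
      rw [h6, ENNReal.rpow_mul]
      apply ENNReal.rpow_le_rpow _ hp0'.le
      exact le_trans (ENNReal.rpow_le_rpow h5 (by linarith)) hSigB
    calc (∫⁻ y in A, f y) ≤ _ := key
      _ ≤ G ^ (1 / p) * ((C'' : ℝ≥0∞) * V ^ p * W⁻¹) ^ (1 / p) :=
        mul_le_mul' (ENNReal.rpow_le_rpow hG hp0'.le) e4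
  -- J ≤ κ Φ
  have hJκ : J ≤ (κ : ℝ≥0∞) * Φ := by
    rw [hJdef, hΦdef, ← lintegral_const_mul' _ _ ENNReal.coe_ne_top]
    apply lintegral_mono_ae
    exact (ae_restrict_iff' hmeasBΩ).mpr (hF1.mono fun y hy hymem => hy hymem.2)
  -- main case distinction
  by_cases hsmall : (β : ℝ≥0∞) * V⁻¹ * J < (β₀ : ℝ≥0∞)
  · -- CASE 1 : small average
    filter_upwards [hbundle] with x hx hxmem
    obtain ⟨hmono, hzero, hA0x, hincx, -, -⟩ := hx
    rcases eq_or_ne ((β : ℝ≥0∞) * V⁻¹ * J) 0 with h0 | hargne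
    · rw [h0, hzero hxmem.2, ENNReal.zero_rpow_of_pos hp0']
      exact zero_le
    · have hargtop : (β : ℝ≥0∞) * V⁻¹ * J ≠ ⊤ := (lt_of_lt_of_le hsmall le_top).ne
      set s : ℝ≥0 := ((β : ℝ≥0∞) * V⁻¹ * J).toNNReal with hsdef
      have hargs : (β : ℝ≥0∞) * V⁻¹ * J = (s : ℝ≥0∞) := (ENNReal.coe_toNNReal hargtop).symm
      have hs0 : 0 < s := by
        rw [pos_iff_ne_zero]
        intro h
        rw [h] at hargs
        exact hargne (by exact_mod_cast hargs)
      have hsβ : s < β₀ := by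
        rw [hargs, ENNReal.coe_lt_coe] at hsmall
        exact hsmall
      have h1 := hincx hxmem.2 s β₀ hs0 hsβ
      have h2 := keyAux_div_ineq_mul
        (hpow_ne _ (by exact_mod_cast hs0.ne')).1
        ((hpow_ne _ (by exact_mod_cast hs0.ne')).2 ENNReal.coe_ne_top)
        (hpow_ne _ (by exact_mod_cast hβ₀0)).1
        ((hpow_ne _ (by exact_mod_cast hβ₀0)).2 ENNReal.coe_ne_top) h1
      -- h2 : φ x ↑s * ↑β₀ ^ p ≤ ↑a * φ x ↑β₀ * ↑s ^ p
      have hb0 : ((β₀ : ℝ≥0∞)) ^ p ≠ 0 := (hpow_ne _ (by exact_mod_cast hβ₀0)).1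
      have hbt : ((β₀ : ℝ≥0∞)) ^ p ≠ ⊤ := (hpow_ne _ (by exact_mod_cast hβ₀0)).2 ENNReal.coe_ne_top
      have h3 : φ x ((s : ℝ≥0∞)) ≤ (a : ℝ≥0∞) * (s : ℝ≥0∞) ^ p * (((β₀ : ℝ≥0∞)) ^ p)⁻¹ := by
        calc φ x ((s : ℝ≥0∞)) = φ x ((s : ℝ≥0∞)) * ((β₀ : ℝ≥0∞)) ^ p *
              (((β₀ : ℝ≥0∞)) ^ p)⁻¹ := by
              rw [mul_assoc, ENNReal.mul_inv_cancel hb0 hbt, mul_one]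
          _ ≤ (a : ℝ≥0∞) * φ x ((β₀ : ℝ≥0∞)) * (s : ℝ≥0∞) ^ p * (((β₀ : ℝ≥0∞)) ^ p)⁻¹ := by
              gcongr
          _ ≤ (a : ℝ≥0∞) * 1 * (s : ℝ≥0∞) ^ p * (((β₀ : ℝ≥0∞)) ^ p)⁻¹ := by
              gcongr
              exact (hA0x hxmem.2).1
          _ = (a : ℝ≥0∞) * (s : ℝ≥0∞) ^ p * (((β₀ : ℝ≥0∞)) ^ p)⁻¹ := by rw [mul_one]
      have h4 := ENNReal.rpow_le_rpow h3 hp0'.le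
      rw [ENNReal.mul_rpow_of_nonneg _ _ hp0'.le, ENNReal.mul_rpow_of_nonneg _ _ hp0'.le,
        keyAux_rpow_rpow_inv hp0, ENNReal.inv_rpow, keyAux_rpow_rpow_inv hp0] at h4
      -- h4 : φ x ↑s ^ (1/p) ≤ a^(1/p) * ↑s * (↑β₀)⁻¹
      have h5 : (φ x ((β : ℝ≥0∞) * V⁻¹ * J)) ^ (1 / p) ≤ (κ : ℝ≥0∞) * ((β : ℝ≥0∞) * V⁻¹ * J) := by
        rw [hargs, hκE]
        calc (φ x ((s : ℝ≥0∞))) ^ (1 / p) ≤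
            (a : ℝ≥0∞) ^ (1 / p) * (s : ℝ≥0∞) * (((β₀ : ℝ≥0∞)))⁻¹ := h4
          _ = (a : ℝ≥0∞) ^ (1 / p) * (((β₀ : ℝ≥0∞)))⁻¹ * (s : ℝ≥0∞) := by ring
      calc (φ x ((β : ℝ≥0∞) * V⁻¹ * J)) ^ (1 / p) ≤
          (κ : ℝ≥0∞) * ((β : ℝ≥0∞) * V⁻¹ * J) := h5
        _ ≤ (κ : ℝ≥0∞) * ((β : ℝ≥0∞) * V⁻¹ * ((κ : ℝ≥0∞) * Φ)) := by gcongr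
        _ = ((κ * κ * β : ℝ≥0) : ℝ≥0∞) * (V⁻¹ * Φ) := by push_cast; ring
        _ ≤ 1 * (V⁻¹ * Φ) := by
            gcongr
            rw [show ((1 : ℝ≥0∞)) = ((1 : ℝ≥0) : ℝ≥0∞) from rfl, ENNReal.coe_le_coe]
            calc κ * κ * β = β * (κ * κ) := by ring
              _ ≤ 1 := hβκκ
        _ = V⁻¹ * Φ := one_mul _
        _ ≤ 2 * V⁻¹ * Φ := by
            rw [show (2 : ℝ≥0∞) * V⁻¹ * Φ = 2 * (V⁻¹ * Φ) from by ring]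
            calc V⁻¹ * Φ = 1 * (V⁻¹ * Φ) := (one_mul _).symm
              _ ≤ 2 * (V⁻¹ * Φ) := by gcongr <;> norm_num
  · -- CASE 2 : large average
    push_neg at hsmall
    rcases eq_or_ne Φ ⊤ with hΦtop | hΦtop
    · refine Eventually.of_forall fun x _ => ?_
      have htop2 : (2 : ℝ≥0∞) * V⁻¹ * Φ = ⊤ := by
        rw [hΦtop]
        exact ENNReal.mul_top (mul_ne_zero (by norm_num) (ENNReal.inv_ne_zero.mpr hVtop))
      rw [htop2]
      exact le_top
    have hMtop : M ≠ ⊤ := by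
      rw [hMdef]
      exact ENNReal.mul_ne_top (ENNReal.inv_ne_top.mpr hV0) hΦtop
    have hJtop : J ≠ ⊤ := ne_top_of_le_ne_top (ENNReal.mul_ne_top ENNReal.coe_ne_top hΦtop) hJκ
    have hJ0 : J ≠ 0 := by
      intro h0
      rw [h0, mul_zero] at hsmall
      exact (ENNReal.coe_pos.mpr hβ₀pos).not_ge hsmall
    have hVJM : V⁻¹ * J ≤ (κ : ℝ≥0∞) * M := by
      rw [hMdef]
      calc V⁻¹ * J ≤ V⁻¹ * ((κ : ℝ≥0∞) * Φ) := by gcongr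
        _ = (κ : ℝ≥0∞) * (V⁻¹ * Φ) := by ring
    have hM1 : (1 : ℝ≥0∞) ≤ M := by
      by_contra hM1'
      push_neg at hM1'
      have h1 : (β₀ : ℝ≥0∞) ≤ ((β * κ : ℝ≥0) : ℝ≥0∞) * M := by
        calc (β₀ : ℝ≥0∞) ≤ (β : ℝ≥0∞) * V⁻¹ * J := hsmall
          _ = (β : ℝ≥0∞) * (V⁻¹ * J) := by ring
          _ ≤ (β : ℝ≥0∞) * ((κ : ℝ≥0∞) * M) := by gcongr
          _ = ((β * κ : ℝ≥0) : ℝ≥0∞) * M := by push_cast; ring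
      have h2 : ((β * κ : ℝ≥0) : ℝ≥0∞) * M < (β₀ : ℝ≥0∞) := by
        calc ((β * κ : ℝ≥0) : ℝ≥0∞) * M < ((β * κ : ℝ≥0) : ℝ≥0∞) * 1 := by
              apply ENNReal.mul_lt_mul_right ?_ ?_ hM1'
              · simp only [ne_eq, ENNReal.coe_eq_zero]
                intro h
                rcases mul_eq_zero.mp h with h' | h'
                · exact hβpos.ne' h'
                · exact hκ0 h'
              · exact ENNReal.coe_ne_top
          _ = ((β * κ : ℝ≥0) : ℝ≥0∞) := mul_one _
          _ ≤ (β₀ : ℝ≥0∞) := by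
              rw [ENNReal.coe_le_coe]
              calc β * κ ≤ (κ * κ)⁻¹ * κ := by
                    gcongr
                    exact le_trans (min_le_left _ _) (min_le_left _ _)
                _ = κ⁻¹ := by
                    rw [mul_inv]
                    rw [mul_assoc, inv_mul_cancel₀ hκ0, mul_one]
                _ ≤ β₀ := by
                    rw [← inv_inv β₀]
                    apply inv_anti₀ (by positivity)
                    rw [hκdef]
                    calc β₀⁻¹ = 1 * β₀⁻¹ := (one_mul _).symm
                      _ ≤ a ^ (1 / p) * β₀⁻¹ := by
                          gcongr
                          rw [← NNReal.one_rpow (1 / p)]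
                          exact NNReal.rpow_le_rpow ha1 hp0'.le
      exact absurd h1 (not_le.mpr h2)
    -- step W ≤ 1
    have hJK : J ≤ (K : ℝ≥0∞) * V * (W ^ (1 / p))⁻¹ := by
      have hint : (∫⁻ y in ball z r ∩ Ω, f y ^ p * ω y) ≤
          (a : ℝ≥0∞) * (((β₀ : ℝ≥0∞))⁻¹) ^ p := by
        calc (∫⁻ y in ball z r ∩ Ω, f y ^ p * ω y)
            ≤ ∫⁻ y in ball z r ∩ Ω, (κ : ℝ≥0∞) ^ p * (φ y (f y) * ω y) := by
              apply lintegral_mono_ae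
              exact (ae_restrict_iff' hmeasBΩ).mpr (hF1p.mono fun y hy hymem => hy hymem.2)
          _ = (κ : ℝ≥0∞) ^ p * ∫⁻ y in ball z r ∩ Ω, φ y (f y) * ω y :=
              lintegral_const_mul' _ _
                (ENNReal.rpow_ne_top_of_nonneg hp0.le ENNReal.coe_ne_top)
          _ ≤ (κ : ℝ≥0∞) ^ p * 1 := by
              gcongr
              exact le_trans (lintegral_mono_set inter_subset_right) hρ'
          _ = (a : ℝ≥0∞) * (((β₀ : ℝ≥0∞))⁻¹) ^ p := by rw [mul_one, hκp]
      have h4 := holder _ inter_subset_left _ hint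
      calc J ≤ ((a : ℝ≥0∞) * (((β₀ : ℝ≥0∞))⁻¹) ^ p) ^ (1 / p) *
            ((C'' : ℝ≥0∞) * V ^ p * W⁻¹) ^ (1 / p) := by rw [hJdef]; exact h4
        _ = (K : ℝ≥0∞) * V * (W ^ (1 / p))⁻¹ := by
            have e1 : ((a : ℝ≥0∞) * (((β₀ : ℝ≥0∞))⁻¹) ^ p) ^ (1 / p)
                = (a : ℝ≥0∞) ^ (1 / p) * ((β₀ : ℝ≥0∞))⁻¹ := by
              rw [ENNReal.mul_rpow_of_nonneg _ _ hp0'.le, keyAux_rpow_rpow_inv hp0]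
            have e2 : ((C'' : ℝ≥0∞) * V ^ p * W⁻¹) ^ (1 / p)
                = (C'' : ℝ≥0∞) ^ (1 / p) * V * (W ^ (1 / p))⁻¹ := by
              rw [ENNReal.mul_rpow_of_nonneg _ _ hp0'.le,
                ENNReal.mul_rpow_of_nonneg _ _ hp0'.le, keyAux_rpow_rpow_inv hp0,
                ENNReal.inv_rpow]
            rw [e1, e2, hKE, ENNReal.mul_rpow_of_nonneg _ _ hp0'.le]
            ring
    have hWp0 : W ^ (1 / p) ≠ 0 := by
      simp [ENNReal.rpow_eq_zero_iff, hW0, hWtop, not_lt.mpr hp0'.le]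
    have hWpt : W ^ (1 / p) ≠ ⊤ := ENNReal.rpow_ne_top_of_nonneg hp0'.le hWtop
    have hW1 : wSet ω (ball z r) ≤ 1 := by
      rw [← hWdef]
      have h1 : (β₀ : ℝ≥0∞) ≤ (β : ℝ≥0∞) * (K : ℝ≥0∞) * (W ^ (1 / p))⁻¹ := by
        calc (β₀ : ℝ≥0∞) ≤ (β : ℝ≥0∞) * V⁻¹ * J := hsmall
          _ ≤ (β : ℝ≥0∞) * V⁻¹ * ((K : ℝ≥0∞) * V * (W ^ (1 / p))⁻¹) := by gcongr
          _ = (β : ℝ≥0∞) * (K : ℝ≥0∞) * (W ^ (1 / p))⁻¹ * (V⁻¹ * V) := by ring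
          _ = (β : ℝ≥0∞) * (K : ℝ≥0∞) * (W ^ (1 / p))⁻¹ := by
              rw [ENNReal.inv_mul_cancel hV0 hVtop, mul_one]
      have h2 : W ^ (1 / p) ≤ (β : ℝ≥0∞) * (K : ℝ≥0∞) * ((β₀ : ℝ≥0∞))⁻¹ := by
        calc W ^ (1 / p) = ((β₀ : ℝ≥0∞))⁻¹ * (β₀ : ℝ≥0∞) * W ^ (1 / p) := by
              rw [ENNReal.inv_mul_cancel (by exact_mod_cast hβ₀0) ENNReal.coe_ne_top, one_mul]
          _ ≤ ((β₀ : ℝ≥0∞))⁻¹ * ((β : ℝ≥0∞) * (K : ℝ≥0∞) * (W ^ (1 / p))⁻¹) * W ^ (1 / p) := by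
              gcongr
          _ = (β : ℝ≥0∞) * (K : ℝ≥0∞) * ((β₀ : ℝ≥0∞))⁻¹ * ((W ^ (1 / p))⁻¹ * W ^ (1 / p)) := by
              ring
          _ = (β : ℝ≥0∞) * (K : ℝ≥0∞) * ((β₀ : ℝ≥0∞))⁻¹ := by
              rw [ENNReal.inv_mul_cancel hWp0 hWpt, mul_one]
      have h3 : W ^ (1 / p) ≤ 1 := by
        refine le_trans h2 ?_
        rw [← ENNReal.coe_inv hβ₀0, ← ENNReal.coe_mul, ← ENNReal.coe_mul]
        exact_mod_cast hβKβ₀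
      calc W = (W ^ (1 / p)) ^ p := (keyAux_rpow_inv_rpow hp0 W).symm
        _ ≤ 1 ^ p := ENNReal.rpow_le_rpow h3 hp0.le
        _ = 1 := ENNReal.one_rpow p
    have hA1B := hA1' z r hr hW1
    rw [← hWdef] at hA1B
    filter_upwards [hA1B, hbundle] with x hxA1 hx hxmem
    obtain ⟨hmonoX, hzeroX, hA0X, hincX, -, -⟩ := hx
    set τ : ℝ≥0∞ := min W⁻¹ ((2 * M) ^ p) with hτdef
    have hτle1 : τ ≤ W⁻¹ := min_le_left _ _
    have hτle2 : τ ≤ (2 * M) ^ p := min_le_right _ _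
    have h2Mtop : (2 : ℝ≥0∞) * M ≠ ⊤ := ENNReal.mul_ne_top (by norm_num) hMtop
    have hτtop : τ ≠ ⊤ :=
      ne_top_of_le_ne_top (ENNReal.rpow_ne_top_of_nonneg hp0.le h2Mtop) hτle2
    have h2M1 : (1 : ℝ≥0∞) ≤ 2 * M := by
      calc (1 : ℝ≥0∞) = 1 * 1 := (one_mul _).symm
        _ ≤ 2 * M := mul_le_mul' (by norm_num) hM1
    have hτ1 : (1 : ℝ≥0∞) ≤ τ := by
      apply le_min
      · rw [ENNReal.one_le_inv]
        rwa [← hWdef] at hW1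
      · calc (1 : ℝ≥0∞) = 1 ^ p := (ENNReal.one_rpow p).symm
          _ ≤ (2 * M) ^ p := ENNReal.rpow_le_rpow h2M1 hp0.le
    have hτ0 : τ ≠ 0 := (lt_of_lt_of_le zero_lt_one hτ1).ne'
    have hargtop : (β : ℝ≥0∞) * V⁻¹ * J ≠ ⊤ :=
      ENNReal.mul_ne_top
        (ENNReal.mul_ne_top ENNReal.coe_ne_top (ENNReal.inv_ne_top.mpr hV0)) hJtop
    -- the key claim
    have hclaim : φ x ((β : ℝ≥0∞) * V⁻¹ * J) ≤ τ := by
      by_contra hcon'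
      have hcon : τ < φ x ((β : ℝ≥0∞) * V⁻¹ * J) := lt_of_not_ge hcon'
      set S : ℝ≥0∞ := max (((β₀ : ℝ≥0∞))⁻¹) (((β : ℝ≥0∞) * V⁻¹ * J) * ((β₁ : ℝ≥0∞))⁻¹)
        with hSdef
      have hS0 : S ≠ 0 := by
        intro h
        have := le_max_left (((β₀ : ℝ≥0∞))⁻¹) (((β : ℝ≥0∞) * V⁻¹ * J) * ((β₁ : ℝ≥0∞))⁻¹)
        rw [← hSdef, h, le_zero_iff] at this
        exact (ENNReal.inv_ne_zero.mpr ENNReal.coe_ne_top) this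
      have hStop : S ≠ ⊤ := by
        rw [hSdef]
        exact (max_lt (lt_top_iff_ne_top.mpr hβ₀invtop)
          (lt_top_iff_ne_top.mpr (ENNReal.mul_ne_top hargtop
            (ENNReal.inv_ne_top.mpr (by exact_mod_cast hβ₁0))))).ne
      -- a.e. transfer property
      have hT : ∀ᵐ y ∂(volume : Measure (Rn n)), y ∈ ball z r ∩ Ω →
          ∀ t : ℝ≥0, 1 ≤ φ y ((t : ℝ≥0∞)) → φ y ((t : ℝ≥0∞)) ≤ τ → (t : ℝ≥0∞) ≤ S := by
        filter_upwards [hxA1] with y hy hymem t h1t h2t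
        by_contra hnt
        push_neg at hnt
        have h3 := hy hxmem hymem t h1t (le_trans h2t hτle1)
        have h4 : (β : ℝ≥0∞) * V⁻¹ * J ≤ (((β₁ * t : ℝ≥0)) : ℝ≥0∞) := by
          have h5 : ((β : ℝ≥0∞) * V⁻¹ * J) * ((β₁ : ℝ≥0∞))⁻¹ ≤ (t : ℝ≥0∞) :=
            le_of_lt (lt_of_le_of_lt (le_max_right _ _) hnt)
          push_cast
          calc (β : ℝ≥0∞) * V⁻¹ * J
              = ((β : ℝ≥0∞) * V⁻¹ * J) * (((β₁ : ℝ≥0∞))⁻¹ * (β₁ : ℝ≥0∞)) := by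
                rw [ENNReal.inv_mul_cancel (by exact_mod_cast hβ₁0) ENNReal.coe_ne_top,
                  mul_one]
            _ = ((β : ℝ≥0∞) * V⁻¹ * J) * ((β₁ : ℝ≥0∞))⁻¹ * (β₁ : ℝ≥0∞) := by ring
            _ ≤ (t : ℝ≥0∞) * (β₁ : ℝ≥0∞) := mul_le_mul_left h5 _
            _ = (β₁ : ℝ≥0∞) * (t : ℝ≥0∞) := mul_comm _ _
        exact absurd (le_trans (hmonoX hxmem.2 h4) (le_trans h3 h2t)) (not_le.mpr hcon)
      -- low/high pointwise bounds
      have hLH : ∀ᵐ y ∂(volume : Measure (Rn n)), y ∈ ball z r ∩ Ω →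
          (φ y (f y) ≤ τ → f y ≤ S) ∧
          (τ < φ y (f y) → f y ^ p * τ ≤ (a : ℝ≥0∞) * S ^ p * φ y (f y)) := by
        filter_upwards [hT, hbundle] with y hTy hy hymem
        obtain ⟨hmono, hzero, hA0y, hincy, hf0y, htopy⟩ := hy
        constructor
        · intro hle
          rcases hf0y with h0 | hbig
          · simp [h0]
          · have hftop : f y ≠ ⊤ := by
              intro h
              rw [h, keyAux_phi_top (hmono hymem.2) (htopy hymem.2)] at hle
              exact hτtop (top_le_iff.mp hle)
            have hft : f y = (((f y).toNNReal : ℝ≥0)) := (ENNReal.coe_toNNReal hftop).symm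
            have h1t : 1 ≤ φ y ((((f y).toNNReal : ℝ≥0) : ℝ≥0∞)) := by
              rw [← hft]
              calc (1 : ℝ≥0∞) ≤ φ y (((β₀ : ℝ≥0∞))⁻¹) := (hA0y hymem.2).2
                _ ≤ φ y (f y) := hmono hymem.2 hbig.le
            rw [hft]
            exact hTy hymem _ h1t (by rw [← hft]; exact hle)
        · intro hgt
          rcases hf0y with h0 | hbig
          · rw [h0, hzero hymem.2] at hgt
            exact absurd hgt (by simp)
          · rcases eq_top_or_lt_top (f y) with hftop | hffin
            · rw [hftop, keyAux_phi_top (hmono hymem.2) (htopy hymem.2)]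
              rw [ENNReal.mul_top (mul_ne_zero (by exact_mod_cast ha0) (hpow_ne S hS0).1)]
              exact le_top
            · by_cases hcase2 : f y ≤ S
              · calc f y ^ p * τ ≤ S ^ p * φ y (f y) :=
                    mul_le_mul' (ENNReal.rpow_le_rpow hcase2 hp0.le) hgt.le
                  _ = 1 * (S ^ p * φ y (f y)) := (one_mul _).symm
                  _ ≤ (a : ℝ≥0∞) * (S ^ p * φ y (f y)) :=
                      mul_le_mul_left (by exact_mod_cast ha1) _
                  _ = (a : ℝ≥0∞) * S ^ p * φ y (f y) := by rw [mul_assoc]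
              · push_neg at hcase2
                obtain ⟨t0, ht0⟩ : ∃ t0 : ℝ≥0, f y = (t0 : ℝ≥0∞) :=
                  ⟨(f y).toNNReal, (ENNReal.coe_toNNReal hffin.ne).symm⟩
                rw [ht0] at hcase2 hgt ⊢
                have ht00 : t0 ≠ 0 := by
                  have : ((0 : ℝ≥0) : ℝ≥0∞) < (t0 : ℝ≥0∞) :=
                    lt_of_le_of_lt (zero_le : 0 ≤ S) hcase2
                  exact_mod_cast this.ne'
                have hsub : ∀ t : ℝ≥0, S < (t : ℝ≥0∞) → t < t0 →
                    ((t0 : ℝ≥0∞)) ^ p * τ ≤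
                      (a : ℝ≥0∞) * (t : ℝ≥0∞) ^ p * φ y ((t0 : ℝ≥0∞)) := by
                  intro t hSt htt0
                  have hτφt : τ < φ y ((t : ℝ≥0∞)) := by
                    by_contra hle'
                    push_neg at hle'
                    have h1t : 1 ≤ φ y ((t : ℝ≥0∞)) := by
                      calc (1 : ℝ≥0∞) ≤ φ y (((β₀ : ℝ≥0∞))⁻¹) := (hA0y hymem.2).2
                        _ ≤ φ y ((t : ℝ≥0∞)) :=
                          hmono hymem.2 (le_trans (le_max_left _ _) hSt.le)
                    exact absurd (hTy hymem t h1t hle') (not_le.mpr hSt)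
                  have ht0pos : (0 : ℝ≥0) < t := by
                    have : (0 : ℝ≥0∞) < (t : ℝ≥0∞) := lt_of_le_of_lt (zero_le : 0 ≤ S) hSt
                    exact_mod_cast this
                  have h1 := hincy hymem.2 t t0 ht0pos htt0
                  have h2 := keyAux_div_ineq_mul
                    (hpow_ne _ (by exact_mod_cast ht0pos.ne')).1
                    ((hpow_ne _ (by exact_mod_cast ht0pos.ne')).2 ENNReal.coe_ne_top)
                    (hpow_ne _ (by exact_mod_cast ht00)).1
                    ((hpow_ne _ (by exact_mod_cast ht00)).2 ENNReal.coe_ne_top) h1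
                  calc ((t0 : ℝ≥0∞)) ^ p * τ = τ * ((t0 : ℝ≥0∞)) ^ p := mul_comm _ _
                    _ ≤ φ y ((t : ℝ≥0∞)) * ((t0 : ℝ≥0∞)) ^ p := mul_le_mul_left hτφt.le _
                    _ ≤ (a : ℝ≥0∞) * φ y ((t0 : ℝ≥0∞)) * (t : ℝ≥0∞) ^ p := h2
                    _ = (a : ℝ≥0∞) * (t : ℝ≥0∞) ^ p * φ y ((t0 : ℝ≥0∞)) := by ring
                by_contra hq
                push_neg at hq
                have hφfin : φ y ((t0 : ℝ≥0∞)) ≠ ⊤ := by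
                  intro h
                  rw [h, ENNReal.mul_top (mul_ne_zero (by exact_mod_cast ha0)
                    (hpow_ne S hS0).1)] at hq
                  exact (not_lt.mpr le_top) hq
                have hφ0 : φ y ((t0 : ℝ≥0∞)) ≠ 0 :=
                  (lt_of_lt_of_le (lt_of_lt_of_le zero_lt_one hτ1) hgt.le).ne'
                have haφ0 : (a : ℝ≥0∞) * φ y ((t0 : ℝ≥0∞)) ≠ 0 :=
                  mul_ne_zero (by exact_mod_cast ha0) hφ0
                have haφt : (a : ℝ≥0∞) * φ y ((t0 : ℝ≥0∞)) ≠ ⊤ :=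
                  ENNReal.mul_ne_top ENNReal.coe_ne_top hφfin
                set R : ℝ≥0∞ :=
                  (((t0 : ℝ≥0∞)) ^ p * τ * ((a : ℝ≥0∞) * φ y ((t0 : ℝ≥0∞)))⁻¹) ^ (1 / p)
                  with hRdef
                have hRp : R ^ p =
                    ((t0 : ℝ≥0∞)) ^ p * τ * ((a : ℝ≥0∞) * φ y ((t0 : ℝ≥0∞)))⁻¹ :=
                  keyAux_rpow_inv_rpow hp0 _
                have hSR : S < R := by
                  have h3 : S ^ p <
                      ((t0 : ℝ≥0∞)) ^ p * τ * ((a : ℝ≥0∞) * φ y ((t0 : ℝ≥0∞)))⁻¹ := by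
                    calc S ^ p = (a : ℝ≥0∞) * S ^ p * φ y ((t0 : ℝ≥0∞)) *
                          ((a : ℝ≥0∞) * φ y ((t0 : ℝ≥0∞)))⁻¹ := by
                          rw [show (a : ℝ≥0∞) * S ^ p * φ y ((t0 : ℝ≥0∞)) *
                              ((a : ℝ≥0∞) * φ y ((t0 : ℝ≥0∞)))⁻¹ =
                              S ^ p * (((a : ℝ≥0∞) * φ y ((t0 : ℝ≥0∞))) *
                              ((a : ℝ≥0∞) * φ y ((t0 : ℝ≥0∞)))⁻¹) from by ring,
                            ENNReal.mul_inv_cancel haφ0 haφt, mul_one]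
                      _ < ((t0 : ℝ≥0∞)) ^ p * τ * ((a : ℝ≥0∞) * φ y ((t0 : ℝ≥0∞)))⁻¹ :=
                          (ENNReal.mul_lt_mul_left
                            (ENNReal.inv_ne_zero.mpr haφt) (ENNReal.inv_ne_top.mpr haφ0) hq)
                  have h4 := ENNReal.rpow_lt_rpow h3 hp0'
                  rwa [keyAux_rpow_rpow_inv hp0] at h4
                have hRf : R ≤ (t0 : ℝ≥0∞) := by
                  have h6 : τ ≤ (a : ℝ≥0∞) * φ y ((t0 : ℝ≥0∞)) := by
                    calc τ ≤ φ y ((t0 : ℝ≥0∞)) := hgt.le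
                      _ = 1 * φ y ((t0 : ℝ≥0∞)) := (one_mul _).symm
                      _ ≤ (a : ℝ≥0∞) * φ y ((t0 : ℝ≥0∞)) :=
                          mul_le_mul_left (by exact_mod_cast ha1) _
                  have h5 : ((t0 : ℝ≥0∞)) ^ p * τ * ((a : ℝ≥0∞) * φ y ((t0 : ℝ≥0∞)))⁻¹ ≤
                      ((t0 : ℝ≥0∞)) ^ p := by
                    calc ((t0 : ℝ≥0∞)) ^ p * τ * ((a : ℝ≥0∞) * φ y ((t0 : ℝ≥0∞)))⁻¹ ≤
                        ((t0 : ℝ≥0∞)) ^ p * ((a : ℝ≥0∞) * φ y ((t0 : ℝ≥0∞))) *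
                          ((a : ℝ≥0∞) * φ y ((t0 : ℝ≥0∞)))⁻¹ := by
                          exact mul_le_mul_left (mul_le_mul_right h6 _) _
                      _ = ((t0 : ℝ≥0∞)) ^ p := by
                          rw [mul_assoc, ENNReal.mul_inv_cancel haφ0 haφt, mul_one]
                  calc R ≤ (((t0 : ℝ≥0∞)) ^ p) ^ (1 / p) := ENNReal.rpow_le_rpow h5 hp0'.le
                    _ = (t0 : ℝ≥0∞) := keyAux_rpow_rpow_inv hp0 _
                obtain ⟨u, hu1, hu2⟩ := exists_between hSR
                have huf : u < (t0 : ℝ≥0∞) := lt_of_lt_of_le hu2 hRf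
                have hutop : u ≠ ⊤ := (lt_of_lt_of_le huf le_top).ne
                have hut : u = ((u.toNNReal : ℝ≥0) : ℝ≥0∞) := (ENNReal.coe_toNNReal hutop).symm
                have h7 := hsub u.toNNReal (by rw [← hut]; exact hu1)
                  (by rw [← ENNReal.coe_lt_coe, ← hut]; exact huf)
                have h9 : ((u.toNNReal : ℝ≥0) : ℝ≥0∞) ^ p < R ^ p := by
                  rw [← hut]
                  exact ENNReal.rpow_lt_rpow hu2 hp0
                have h8 : (a : ℝ≥0∞) * ((u.toNNReal : ℝ≥0) : ℝ≥0∞) ^ p * φ y ((t0 : ℝ≥0∞)) <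
                    ((t0 : ℝ≥0∞)) ^ p * τ := by
                  calc (a : ℝ≥0∞) * ((u.toNNReal : ℝ≥0) : ℝ≥0∞) ^ p * φ y ((t0 : ℝ≥0∞))
                      = ((u.toNNReal : ℝ≥0) : ℝ≥0∞) ^ p *
                          ((a : ℝ≥0∞) * φ y ((t0 : ℝ≥0∞))) := by ring
                    _ < R ^ p * ((a : ℝ≥0∞) * φ y ((t0 : ℝ≥0∞))) :=
                        (ENNReal.mul_lt_mul_left haφ0 haφt h9)
                    _ = ((t0 : ℝ≥0∞)) ^ p * τ * (((a : ℝ≥0∞) * φ y ((t0 : ℝ≥0∞)))⁻¹ *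
                          ((a : ℝ≥0∞) * φ y ((t0 : ℝ≥0∞)))) := by
                        rw [hRp]; ring
                    _ = ((t0 : ℝ≥0∞)) ^ p * τ := by
                        rw [ENNReal.inv_mul_cancel haφ0 haφt, mul_one]
                exact absurd h7 (not_le.mpr h8)
      -- split J into low and high parts
      set P : Set (Rn n) := {y | φ y (f y) ≤ τ} with hPdef
      have hPmeas : MeasurableSet P := measurableSet_le hφf measurable_const
      have hJsplit : J = (∫⁻ y in (ball z r ∩ Ω) ∩ P, f y) +
          ∫⁻ y in (ball z r ∩ Ω) ∩ Pᶜ, f y := by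
        rw [hJdef, ← lintegral_add_compl (fun y => f y) hPmeas
          (μ := volume.restrict (ball z r ∩ Ω))]
        congr 1
        · rw [Measure.restrict_restrict hPmeas, inter_comm]
        · rw [Measure.restrict_restrict hPmeas.compl, inter_comm]
      have hsubB : (ball z r ∩ Ω) ∩ P ⊆ ball z r := fun y hy => hy.1.1
      have hsubB' : (ball z r ∩ Ω) ∩ Pᶜ ⊆ ball z r := fun y hy => hy.1.1
      have hsubΩ' : (ball z r ∩ Ω) ∩ Pᶜ ⊆ Ω := fun y hy => hy.1.2
      have hlow : (∫⁻ y in (ball z r ∩ Ω) ∩ P, f y) ≤ S * V := by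
        calc (∫⁻ y in (ball z r ∩ Ω) ∩ P, f y) ≤ ∫⁻ _y in (ball z r ∩ Ω) ∩ P, S := by
              apply lintegral_mono_ae
              apply (ae_restrict_iff' (hmeasBΩ.inter hPmeas)).mpr
              filter_upwards [hLH] with y hy hymem
              exact (hy hymem.1).1 hymem.2
          _ = S * volume ((ball z r ∩ Ω) ∩ P) := setLIntegral_const _ _
          _ ≤ S * V := by
              gcongr
              rw [hVdef]
              exact measure_mono hsubB
      have hhigh : (∫⁻ y in (ball z r ∩ Ω) ∩ Pᶜ, f y) ≤ (K : ℝ≥0∞) * S * V := by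
        have hptgt : ∀ᵐ y ∂(volume : Measure (Rn n)), y ∈ (ball z r ∩ Ω) ∩ Pᶜ →
            f y ^ p * τ ≤ (a : ℝ≥0∞) * S ^ p * φ y (f y) := by
          filter_upwards [hLH] with y hy hymem
          exact (hy hymem.1).2 (lt_of_not_ge hymem.2)
        rcases le_total ((2 * M) ^ p) W⁻¹ with hcaseA | hcaseB
        · -- the modular threshold case : τ = (2M)^p
          have hτeq : τ = (2 * M) ^ p := min_eq_right hcaseA
          have hpt : ∀ᵐ y ∂(volume : Measure (Rn n)), y ∈ (ball z r ∩ Ω) ∩ Pᶜ →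
              f y ≤ (a : ℝ≥0∞) ^ (1 / p) * S * (2 * M)⁻¹ * φ y (f y) ^ (1 / p) := by
            filter_upwards [hptgt] with y hy hymem
            have h1 := hy hymem
            have h2 : f y ^ p ≤ (a : ℝ≥0∞) * S ^ p * φ y (f y) * τ⁻¹ := by
              calc f y ^ p = f y ^ p * τ * τ⁻¹ := by
                    rw [mul_assoc, ENNReal.mul_inv_cancel hτ0 hτtop, mul_one]
                _ ≤ (a : ℝ≥0∞) * S ^ p * φ y (f y) * τ⁻¹ := mul_le_mul_left h1 _
            have h3 := ENNReal.rpow_le_rpow h2 hp0'.le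
            rw [keyAux_rpow_rpow_inv hp0] at h3
            calc f y ≤ ((a : ℝ≥0∞) * S ^ p * φ y (f y) * τ⁻¹) ^ (1 / p) := h3
              _ = (a : ℝ≥0∞) ^ (1 / p) * S * (2 * M)⁻¹ * φ y (f y) ^ (1 / p) := by
                  rw [hτeq, ENNReal.mul_rpow_of_nonneg _ _ hp0'.le,
                    ENNReal.mul_rpow_of_nonneg _ _ hp0'.le,
                    ENNReal.mul_rpow_of_nonneg _ _ hp0'.le,
                    keyAux_rpow_rpow_inv hp0, ENNReal.inv_rpow, keyAux_rpow_rpow_inv hp0]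
                  ring
          have hΦVM : Φ = V * M := by
            rw [hMdef, ← mul_assoc, ENNReal.mul_inv_cancel hV0 hVtop, one_mul]
          have hM0 : M ≠ 0 := (lt_of_lt_of_le zero_lt_one hM1).ne'
          have h2M0 : (2 : ℝ≥0∞) * M ≠ 0 := mul_ne_zero (by norm_num) hM0
          calc (∫⁻ y in (ball z r ∩ Ω) ∩ Pᶜ, f y)
              ≤ ∫⁻ y in (ball z r ∩ Ω) ∩ Pᶜ,
                  (a : ℝ≥0∞) ^ (1 / p) * S * (2 * M)⁻¹ * φ y (f y) ^ (1 / p) := by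
                apply lintegral_mono_ae
                exact (ae_restrict_iff' (hmeasBΩ.inter hPmeas.compl)).mpr hpt
            _ = (a : ℝ≥0∞) ^ (1 / p) * S * (2 * M)⁻¹ *
                  ∫⁻ y in (ball z r ∩ Ω) ∩ Pᶜ, φ y (f y) ^ (1 / p) := by
                apply lintegral_const_mul'
                exact ENNReal.mul_ne_top (ENNReal.mul_ne_top
                  (ENNReal.rpow_ne_top_of_nonneg hp0'.le ENNReal.coe_ne_top) hStop)
                  (ENNReal.inv_ne_top.mpr h2M0)
            _ ≤ (a : ℝ≥0∞) ^ (1 / p) * S * (2 * M)⁻¹ * Φ := by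
                gcongr
                rw [hΦdef]
                exact lintegral_mono_set (fun y hy => hy.1)
            _ = (a : ℝ≥0∞) ^ (1 / p) * S * (V * (M * (2 * M)⁻¹)) := by
                rw [hΦVM]; ring
            _ ≤ (a : ℝ≥0∞) ^ (1 / p) * S * (V * 1) := by
                gcongr
                rw [ENNReal.mul_inv (Or.inl (by norm_num)) (Or.inl (by norm_num))]
                calc M * (2⁻¹ * M⁻¹) = 2⁻¹ * (M * M⁻¹) := by ring
                  _ = 2⁻¹ := by rw [ENNReal.mul_inv_cancel hM0 hMtop, mul_one]
                  _ ≤ 1 := by norm_num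
            _ = (a : ℝ≥0∞) ^ (1 / p) * S * V := by rw [mul_one]
            _ ≤ (K : ℝ≥0∞) * S * V := by gcongr
        · -- the weight threshold case : τ = W⁻¹
          have hτeq : τ = W⁻¹ := min_eq_left hcaseB
          have hpt : ∀ᵐ y ∂(volume : Measure (Rn n)), y ∈ (ball z r ∩ Ω) ∩ Pᶜ →
              f y ^ p * ω y ≤ ((a : ℝ≥0∞) * S ^ p * W) * (φ y (f y) * ω y) := by
            filter_upwards [hptgt] with y hy hymem
            have h1 := hy hymem
            rw [hτeq] at h1
            have h2 : f y ^ p ≤ (a : ℝ≥0∞) * S ^ p * φ y (f y) * W := by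
              calc f y ^ p = f y ^ p * W⁻¹ * W := by
                    rw [mul_assoc, ENNReal.inv_mul_cancel hW0 hWtop, mul_one]
                _ ≤ (a : ℝ≥0∞) * S ^ p * φ y (f y) * W := mul_le_mul_left h1 _
            calc f y ^ p * ω y ≤ ((a : ℝ≥0∞) * S ^ p * φ y (f y) * W) * ω y :=
                mul_le_mul_left h2 _
              _ = ((a : ℝ≥0∞) * S ^ p * W) * (φ y (f y) * ω y) := by ring
          have hint : (∫⁻ y in (ball z r ∩ Ω) ∩ Pᶜ, f y ^ p * ω y) ≤
              (a : ℝ≥0∞) * S ^ p * W := by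
            calc (∫⁻ y in (ball z r ∩ Ω) ∩ Pᶜ, f y ^ p * ω y)
                ≤ ∫⁻ y in (ball z r ∩ Ω) ∩ Pᶜ,
                    ((a : ℝ≥0∞) * S ^ p * W) * (φ y (f y) * ω y) := by
                  apply lintegral_mono_ae
                  exact (ae_restrict_iff' (hmeasBΩ.inter hPmeas.compl)).mpr hpt
              _ = ((a : ℝ≥0∞) * S ^ p * W) *
                    ∫⁻ y in (ball z r ∩ Ω) ∩ Pᶜ, φ y (f y) * ω y := by
                  apply lintegral_const_mul'
                  exact ENNReal.mul_ne_top (ENNReal.mul_ne_top ENNReal.coe_ne_top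
                    (ENNReal.rpow_ne_top_of_nonneg hp0.le hStop)) hWtop
              _ ≤ ((a : ℝ≥0∞) * S ^ p * W) * 1 := by
                  gcongr
                  exact le_trans (lintegral_mono_set hsubΩ') hρ'
              _ = (a : ℝ≥0∞) * S ^ p * W := mul_one _
          have h4 := holder _ hsubB' _ hint
          calc (∫⁻ y in (ball z r ∩ Ω) ∩ Pᶜ, f y)
              ≤ ((a : ℝ≥0∞) * S ^ p * W) ^ (1 / p) *
                  ((C'' : ℝ≥0∞) * V ^ p * W⁻¹) ^ (1 / p) := h4
            _ = ((a : ℝ≥0∞) * (C'' : ℝ≥0∞)) ^ (1 / p) * S * V *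
                  (W ^ (1 / p) * (W ^ (1 / p))⁻¹) := by
                have e1 : ((a : ℝ≥0∞) * S ^ p * W) ^ (1 / p)
                    = (a : ℝ≥0∞) ^ (1 / p) * S * W ^ (1 / p) := by
                  rw [ENNReal.mul_rpow_of_nonneg _ _ hp0'.le,
                    ENNReal.mul_rpow_of_nonneg _ _ hp0'.le, keyAux_rpow_rpow_inv hp0]
                have e2 : ((C'' : ℝ≥0∞) * V ^ p * W⁻¹) ^ (1 / p)
                    = (C'' : ℝ≥0∞) ^ (1 / p) * V * (W ^ (1 / p))⁻¹ := by
                  rw [ENNReal.mul_rpow_of_nonneg _ _ hp0'.le,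
                    ENNReal.mul_rpow_of_nonneg _ _ hp0'.le, keyAux_rpow_rpow_inv hp0,
                    ENNReal.inv_rpow]
                rw [e1, e2, ENNReal.mul_rpow_of_nonneg ((a : ℝ≥0∞)) ((C'' : ℝ≥0∞)) hp0'.le]
                ring
            _ = ((a : ℝ≥0∞) * (C'' : ℝ≥0∞)) ^ (1 / p) * S * V := by
                rw [ENNReal.mul_inv_cancel hWp0 hWpt, mul_one]
            _ ≤ (K : ℝ≥0∞) * S * V := by gcongr
      have hJle : J ≤ ((2 * K : ℝ≥0) : ℝ≥0∞) * S * V := by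
        rw [hJsplit]
        calc (∫⁻ y in (ball z r ∩ Ω) ∩ P, f y) + ∫⁻ y in (ball z r ∩ Ω) ∩ Pᶜ, f y
            ≤ S * V + (K : ℝ≥0∞) * S * V := add_le_add hlow hhigh
          _ ≤ (K : ℝ≥0∞) * S * V + (K : ℝ≥0∞) * S * V :=
              add_le_add (by
                calc S * V = 1 * S * V := by rw [one_mul]
                  _ ≤ (K : ℝ≥0∞) * S * V :=
                    mul_le_mul_left (mul_le_mul_left hK1 S) V) le_rfl
          _ = ((2 * K : ℝ≥0) : ℝ≥0∞) * S * V := by push_cast; ring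
      have hSD : S ≤ (D : ℝ≥0∞) * ((β : ℝ≥0∞) * V⁻¹ * J) := by
        rw [hSdef]
        apply max_le
        · calc ((β₀ : ℝ≥0∞))⁻¹ =
              (β₀ : ℝ≥0∞) * (((β₀ : ℝ≥0∞)) * ((β₀ : ℝ≥0∞)))⁻¹ := by
                rw [ENNReal.mul_inv (Or.inl (by exact_mod_cast hβ₀0))
                  (Or.inl ENNReal.coe_ne_top), ← mul_assoc,
                  ENNReal.mul_inv_cancel (by exact_mod_cast hβ₀0) ENNReal.coe_ne_top, one_mul]
            _ ≤ ((β : ℝ≥0∞) * V⁻¹ * J) * (((β₀ : ℝ≥0∞)) * ((β₀ : ℝ≥0∞)))⁻¹ :=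
                mul_le_mul_left hsmall _
            _ = (((β₀ : ℝ≥0∞)) * ((β₀ : ℝ≥0∞)))⁻¹ * 1 * ((β : ℝ≥0∞) * V⁻¹ * J) := by ring
            _ ≤ (((β₀ : ℝ≥0∞)) * ((β₀ : ℝ≥0∞)))⁻¹ * ((β₁ : ℝ≥0∞))⁻¹ *
                  ((β : ℝ≥0∞) * V⁻¹ * J) := by
                gcongr
                rw [ENNReal.one_le_inv]
                exact_mod_cast hβ₁le
            _ = (D : ℝ≥0∞) * ((β : ℝ≥0∞) * V⁻¹ * J) := by rw [hDE]
        · calc ((β : ℝ≥0∞) * V⁻¹ * J) * ((β₁ : ℝ≥0∞))⁻¹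
              = ((β₁ : ℝ≥0∞))⁻¹ * 1 * ((β : ℝ≥0∞) * V⁻¹ * J) := by ring
            _ ≤ ((β₁ : ℝ≥0∞))⁻¹ * ((((β₀ : ℝ≥0∞)) * ((β₀ : ℝ≥0∞)))⁻¹) *
                  ((β : ℝ≥0∞) * V⁻¹ * J) := by
                gcongr
                rw [ENNReal.one_le_inv]
                calc ((β₀ : ℝ≥0∞)) * ((β₀ : ℝ≥0∞)) ≤ 1 * 1 := by
                      gcongr <;> exact_mod_cast hβ₀le
                  _ = 1 := one_mul _
            _ = (D : ℝ≥0∞) * ((β : ℝ≥0∞) * V⁻¹ * J) := by rw [hDE]; ring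
      have hfinal : J ≤ ((2 * K * D * β : ℝ≥0) : ℝ≥0∞) * J := by
        calc J ≤ ((2 * K : ℝ≥0) : ℝ≥0∞) * S * V := hJle
          _ ≤ ((2 * K : ℝ≥0) : ℝ≥0∞) * ((D : ℝ≥0∞) * ((β : ℝ≥0∞) * V⁻¹ * J)) * V := by
              gcongr
          _ = ((2 * K * D * β : ℝ≥0) : ℝ≥0∞) * J * (V⁻¹ * V) := by push_cast; ring
          _ = ((2 * K * D * β : ℝ≥0) : ℝ≥0∞) * J := by
              rw [ENNReal.inv_mul_cancel hV0 hVtop, mul_one]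
      have hJJ : J < J := by
        calc J ≤ ((2 * K * D * β : ℝ≥0) : ℝ≥0∞) * J := hfinal
          _ < 1 * J := by
              apply (ENNReal.mul_lt_mul_left hJ0 hJtop)
              exact_mod_cast hβKD
          _ = J := one_mul J
      exact absurd hJJ (lt_irrefl J)
    calc (φ x ((β : ℝ≥0∞) * V⁻¹ * J)) ^ (1 / p) ≤ τ ^ (1 / p) :=
        ENNReal.rpow_le_rpow hclaim hp0'.le
      _ ≤ ((2 * M) ^ p) ^ (1 / p) := ENNReal.rpow_le_rpow hτle2 hp0'.le
      _ = 2 * M := keyAux_rpow_rpow_inv hp0 _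
      _ = 2 * V⁻¹ * Φ := by rw [hMdef]; ring
end
end

section
/- Let Ω ⊆ ℝⁿ be open, let ω be a weight, and let φ ∈ Φ_w(Ω) satisfy (A0), (A2)_ω and (aInc)_p with p ∈ (0,∞). Then there exist β > 0 and a nonnegative h ∈ L¹(Ω,ω) ∩ L^∞(Ω) such that for every open ball B, a.e. x ∈ B∩Ω, and every measurable f with 0 ≤ f ≤ 1/β₀ (where β₀ is the constant from (A0)), one has φ(x, (β/|B|)∫_{B∩Ω} f dy)^{1/p} ≤ (1/|B|)∫_{B∩Ω} φ(y, f(y))^{1/p} dy + h(x)^{1/p} + (1/|B|)∫_{B∩Ω} h(y)^{1/p} dy. -/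
open MeasureTheory Metric Filter Set
open scoped ENNReal NNReal Topology

noncomputable section

private lemma third_rpow_le (u v w : ℝ≥0∞) {q : ℝ} (hq : 0 ≤ q) :
    ((3 : ℝ≥0∞)⁻¹ * (u + v + w)) ^ q ≤ u ^ q + v ^ q + w ^ q := by
  set m := max u (max v w) with hm
  have hmax : (3 : ℝ≥0∞)⁻¹ * (u + v + w) ≤ m := by
    have hu : u ≤ m := le_max_left _ _
    have hv : v ≤ m := le_trans (le_max_left _ _) (le_max_right _ _)
    have hw : w ≤ m := le_trans (le_max_right _ _) (le_max_right _ _)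
    calc (3 : ℝ≥0∞)⁻¹ * (u + v + w) ≤ (3 : ℝ≥0∞)⁻¹ * (3 * m) := by
          gcongr
          calc u + v + w ≤ m + m + m := by gcongr
            _ = 3 * m := by ring
      _ = m := by rw [← mul_assoc, ENNReal.inv_mul_cancel (by norm_num) (by norm_num), one_mul]
  refine le_trans (ENNReal.rpow_le_rpow hmax hq) ?_
  have hcases : m = u ∨ m = v ∨ m = w := by
    rcases max_cases u (max v w) with ⟨h, -⟩ | ⟨h, -⟩
    · exact Or.inl h
    · rcases max_cases v w with ⟨h', -⟩ | ⟨h', -⟩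
      · exact Or.inr (Or.inl (h.trans h'))
      · exact Or.inr (Or.inr (h.trans h'))
  rcases hcases with h | h | h <;> rw [h]
  · exact le_add_right (le_add_right le_rfl)
  · exact le_add_right le_add_self
  · exact le_add_self

private lemma jensen_aInc {α : Type*} [MeasurableSpace α] (μ : Measure α)
    (S : Set α) (hS : MeasurableSet S)
    (V : ℝ≥0∞) (hV0 : V ≠ 0) (hVt : V ≠ ∞) (hSV : μ S ≤ V)
    (ψ : ℝ≥0∞ → ℝ≥0∞) (hψ0 : ψ 0 = 0)
    (a : ℝ≥0∞) (ha1 : 1 ≤ a) (hat : a ≠ ∞)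
    (hinc : ∀ s t : ℝ≥0∞, 0 < s → s < t → t ≠ ∞ → t * ψ s ≤ a * s * ψ t)
    (g : α → ℝ≥0∞) (hg : Measurable g) (M : ℝ≥0∞) (hM : M ≠ ∞) (hgM : ∀ y, g y ≤ M)
    (W : ℝ≥0∞) (hW : 4 * a ^ 2 * W ≤ V⁻¹ * ∫⁻ y in S, g y ∂μ) :
    ψ W ≤ V⁻¹ * ∫⁻ y in S, ψ (g y) ∂μ := by
  rcases eq_or_ne W 0 with hW0 | hW0
  · simp [hW0, hψ0]
  set I := ∫⁻ y in S, g y ∂μ with hI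
  set T := V⁻¹ * I with hT
  have ha0 : a ≠ 0 := by rintro rfl; simp at ha1
  have hIt : I ≠ ∞ := by
    refine ne_top_of_le_ne_top (ENNReal.mul_ne_top hM hVt) ?_
    calc I ≤ ∫⁻ _ in S, M ∂μ := lintegral_mono fun y => hgM y
      _ = M * μ S := setLIntegral_const S M
      _ ≤ M * V := by gcongr
  have hTt : T ≠ ∞ := ENNReal.mul_ne_top (ENNReal.inv_ne_top.2 hV0) hIt
  have hT0 : T ≠ 0 := by
    intro hzero
    apply hW0
    have h' := hW
    rw [hzero, le_zero_iff] at h'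
    simpa [ha0] using h'
  have hc0 : T / 2 ≠ 0 := by simp [ENNReal.div_eq_zero_iff, hT0]
  have hct : T / 2 ≠ ∞ := by simp [ENNReal.div_eq_top, hTt]
  have h42 : T / 4 < T / 2 := by
    rw [div_eq_mul_inv, div_eq_mul_inv]
    exact (ENNReal.mul_lt_mul_iff_right hT0 hTt).2 (by rw [ENNReal.inv_lt_inv]; norm_num)
  have hWle4 : W ≤ T / 4 := by
    refine (ENNReal.le_div_iff_mul_le (Or.inl (by norm_num)) (Or.inl (by norm_num))).2 ?_
    calc W * 4 = 4 * 1 ^ 2 * W := by ring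
      _ ≤ 4 * a ^ 2 * W := by gcongr
      _ ≤ T := hW
  have hWlt : W < T / 2 := hWle4.trans_lt h42
  set E := S ∩ {y | T / 2 < g y} with hE
  have hEmeas : MeasurableSet E := hS.inter (measurableSet_lt measurable_const hg)
  have hES : E ⊆ S := Set.inter_subset_left
  have hsplit : I = (∫⁻ y in E, g y ∂μ) + ∫⁻ y in S \ E, g y ∂μ := by
    rw [hI, ← lintegral_union (hS.diff hEmeas) disjoint_sdiff_right,
      Set.union_diff_cancel hES]
  have hdiff : ∫⁻ y in S \ E, g y ∂μ ≤ T / 2 * V := by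
    calc ∫⁻ y in S \ E, g y ∂μ ≤ ∫⁻ _ in S \ E, T / 2 ∂μ := by
          refine lintegral_mono_ae ((ae_restrict_iff' (hS.diff hEmeas)).2
            (ae_of_all _ fun y hy => ?_))
          by_contra hcon
          exact hy.2 ⟨hy.1, lt_of_not_ge hcon⟩
      _ = T / 2 * μ (S \ E) := setLIntegral_const _ _
      _ ≤ T / 2 * V := by
          gcongr
          exact (measure_mono Set.diff_subset).trans hSV
  have hVT : V * T = I := by rw [hT, ← mul_assoc, ENNReal.mul_inv_cancel hV0 hVt, one_mul]
  have hEg : T / 2 * V ≤ ∫⁻ y in E, g y ∂μ := by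
    have h1 : T / 2 * V + T / 2 * V = V * T := by
      rw [← add_mul, ENNReal.add_halves, mul_comm]
    have h2 : T / 2 * V + T / 2 * V ≤ (∫⁻ y in E, g y ∂μ) + T / 2 * V := by
      rw [h1, hVT, hsplit]; gcongr
    exact (ENNReal.add_le_add_iff_right (ENNReal.mul_ne_top hct hVt)).1 h2
  set J := ∫⁻ y in S, ψ (g y) ∂μ with hJ
  have hkey : ψ (T / 2) * (T / 2 * V) ≤ a * (T / 2) * J := by
    calc ψ (T / 2) * (T / 2 * V) ≤ ψ (T / 2) * ∫⁻ y in E, g y ∂μ := by gcongr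
      _ = ∫⁻ y in E, ψ (T / 2) * g y ∂μ := (lintegral_const_mul _ hg).symm
      _ ≤ ∫⁻ y in E, a * (T / 2) * ψ (g y) ∂μ := by
          refine lintegral_mono_ae ((ae_restrict_iff' hEmeas).2
            (ae_of_all _ fun y hy => ?_))
          have hcr := hinc (T / 2) (g y) (pos_iff_ne_zero.2 hc0) hy.2
            (ne_top_of_le_ne_top hM (hgM y))
          calc ψ (T / 2) * g y = g y * ψ (T / 2) := mul_comm _ _
            _ ≤ a * (T / 2) * ψ (g y) := hcr
      _ = a * (T / 2) * ∫⁻ y in E, ψ (g y) ∂μ :=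
          lintegral_const_mul' _ _ (ENNReal.mul_ne_top hat hct)
      _ ≤ a * (T / 2) * J := mul_le_mul_right (lintegral_mono_set hES) _
  have h1 : T / 2 * ψ W ≤ a * W * ψ (T / 2) :=
    hinc W (T / 2) (pos_iff_ne_zero.2 hW0) hWlt hct
  have haW : a * (a * W) ≤ T / 2 := by
    refine le_trans ?_ h42.le
    refine (ENNReal.le_div_iff_mul_le (Or.inl (by norm_num)) (Or.inl (by norm_num))).2 ?_
    calc a * (a * W) * 4 = 4 * a ^ 2 * W := by ring
      _ ≤ T := hW
  have h3 : ψ W * V * (T / 2 * (T / 2)) ≤ J * (T / 2 * (T / 2)) := by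
    calc ψ W * V * (T / 2 * (T / 2)) = T / 2 * ψ W * (T / 2 * V) := by ring
      _ ≤ a * W * ψ (T / 2) * (T / 2 * V) := by gcongr
      _ = a * W * (ψ (T / 2) * (T / 2 * V)) := by ring
      _ ≤ a * W * (a * (T / 2) * J) := by gcongr
      _ = a * (a * W) * (T / 2) * J := by ring
      _ ≤ T / 2 * (T / 2) * J := by gcongr
      _ = J * (T / 2 * (T / 2)) := by ring
  have h4 : ψ W * V ≤ J :=
    (ENNReal.mul_le_mul_iff_left (mul_ne_zero hc0 hc0) (ENNReal.mul_ne_top hct hct)).1 h3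
  calc ψ W ≤ J / V := (ENNReal.le_div_iff_mul_le (Or.inl hV0) (Or.inl hVt)).2 h4
    _ = V⁻¹ * J := ENNReal.div_eq_inv_mul

/-- Key estimate for the part of `f` with small values. -/
theorem key_estimate_small_part
    (n : ℕ) (Ω : Set (Rn n)) (hΩ : IsOpen Ω)
    (ω : Rn n → ℝ≥0∞) (hw : IsWeight ω)
    (φ : Rn n → ℝ≥0∞ → ℝ≥0∞) (p : ℝ) (hp0 : 0 < p)
    (hφ : IsWeakPhi Ω φ)
    (β₀ : ℝ≥0) (hβ₀pos : 0 < β₀) (hβ₀le : β₀ ≤ 1)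
    (hA0 : ∀ᵐ x ∂(volume : Measure (Rn n)), x ∈ Ω →
      φ x β₀ ≤ 1 ∧ 1 ≤ φ x ((β₀ : ℝ≥0∞)⁻¹))
    (hA2 : A2w Ω ω φ) (hInc : AInc Ω φ p) :
    ∃ β : ℝ≥0, 0 < β ∧ ∃ h : Rn n → ℝ≥0, MemL1wLinf Ω ω h ∧
      ∀ f : Rn n → ℝ≥0∞, Measurable f → (∀ y, f y ≤ (β₀ : ℝ≥0∞)⁻¹) →
        ∀ (z : Rn n) (r : ℝ), 0 < r →
          ∀ᵐ x ∂(volume : Measure (Rn n)), x ∈ ball z r ∩ Ω →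
            (φ x ((β : ℝ≥0∞) * (volume (ball z r))⁻¹ *
                ∫⁻ y in ball z r ∩ Ω, f y)) ^ (1 / p) ≤
              (volume (ball z r))⁻¹ *
                  (∫⁻ y in ball z r ∩ Ω, (φ y (f y)) ^ (1 / p)) +
                (h x : ℝ≥0∞) ^ (1 / p) +
                (volume (ball z r))⁻¹ *
                  ∫⁻ y in ball z r ∩ Ω, (h y : ℝ≥0∞) ^ (1 / p) := by
  classical
  obtain ⟨a, ha1, haInc⟩ := hInc
  obtain ⟨β₂, hβ₂0, hβ₂1, h, hh, hA2ae⟩ := hA2 1 one_pos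
  have hp0' : (0 : ℝ) < 1 / p := by positivity
  have ha0 : a ≠ 0 := (lt_of_lt_of_le one_pos ha1).ne'
  set c3 : ℝ≥0 := 3 * a with hc3
  have hc30 : c3 ≠ 0 := by simp [hc3, ha0]
  have hc3gt : (1 : ℝ≥0) < c3 := by
    calc (1 : ℝ≥0) < 3 := by norm_num
      _ = 3 * 1 := (mul_one _).symm
      _ ≤ 3 * a := by gcongr
  set θ : ℝ≥0 := c3⁻¹ ^ (1 / p) with hθ
  have hθ0 : θ ≠ 0 := (NNReal.rpow_pos (by positivity)).ne'
  have hθ1 : θ < 1 := NNReal.rpow_lt_one (by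
    rw [NNReal.inv_lt_one_iff hc30]; exact hc3gt) hp0'
  set a' : ℝ≥0 := a ^ (1 / p) with ha'
  have ha'1 : (1 : ℝ≥0) ≤ a' := by
    calc (1 : ℝ≥0) = 1 ^ (1 / p) := (NNReal.one_rpow _).symm
      _ ≤ a ^ (1 / p) := NNReal.rpow_le_rpow ha1 hp0'.le
  have ha'0 : a' ≠ 0 := (lt_of_lt_of_le one_pos ha'1).ne'
  set β₃ : ℝ≥0 := θ * β₂ * β₀ * β₀ with hβ₃
  have hβ₃0 : β₃ ≠ 0 := by
    simp [hβ₃, hθ0, hβ₂0.ne', hβ₀pos.ne']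
  set d : ℝ≥0 := 4 * a' ^ 2 with hd
  have hd0 : d ≠ 0 := by simp [hd, ha'0]
  refine ⟨β₃ / d, by positivity, h, hh, ?_⟩
  intro f hf hfle z r hr
  set B := ball z r with hB
  set S := B ∩ Ω with hS
  have hSmeas : MeasurableSet S := measurableSet_ball.inter hΩ.measurableSet
  set V := volume B with hV
  have hV0 : V ≠ 0 := (measure_ball_pos volume z hr).ne'
  have hVt : V ≠ ∞ := measure_ball_lt_top.ne
  have hβ₀invt : ((β₀ : ℝ≥0∞)⁻¹ : ℝ≥0∞) ≠ ∞ :=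
    ENNReal.inv_ne_top.2 (by exact_mod_cast hβ₀pos.ne')
  filter_upwards [hA2ae, haInc, hφ.mono, hφ.map_zero] with x hxA2 hxInc hxMono hxZero
  intro hxS
  have hxΩ : x ∈ Ω := hxS.2
  -- pointwise key estimate in y
  have hkey : ∀ᵐ y ∂(volume : Measure (Rn n)), y ∈ S →
      (φ x ((β₃ : ℝ≥0∞) * f y)) ^ (1 / p) ≤
        (φ y (f y)) ^ (1 / p) + (h x : ℝ≥0∞) ^ (1 / p) + (h y : ℝ≥0∞) ^ (1 / p) := by
    filter_upwards [hxA2, hφ.mono, hA0] with y hyA2 hyMono hyA0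
    intro hyS
    have hyΩ : y ∈ Ω := hyS.2
    have hfyt : f y ≠ ∞ := ne_top_of_le_ne_top hβ₀invt (hfle y)
    rcases eq_or_ne (f y) 0 with hfy0 | hfy0
    · rw [hfy0, mul_zero, hxZero hxΩ, ENNReal.zero_rpow_of_pos hp0']
      exact zero_le
    set tn : ℝ≥0 := (f y).toNNReal with htn
    have htcoe : (tn : ℝ≥0∞) = f y := ENNReal.coe_toNNReal hfyt
    have htn0 : tn ≠ 0 := by
      simp [htn, ENNReal.toNNReal_eq_zero_iff, hfy0, hfyt]
    have hfy' : (tn : ℝ≥0∞) ≤ (β₀ : ℝ≥0∞)⁻¹ := htcoe ▸ hfle y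
    have hβ₀c : (β₀ : ℝ≥0∞) ≠ 0 := by exact_mod_cast hβ₀pos.ne'
    have hcoele : ((β₀ * β₀ * tn : ℝ≥0) : ℝ≥0∞) ≤ (β₀ : ℝ≥0∞) := by
      push_cast
      calc (β₀ : ℝ≥0∞) * β₀ * tn = β₀ * (β₀ * tn) := by ring
        _ ≤ β₀ * (β₀ * (β₀ : ℝ≥0∞)⁻¹) := by gcongr
        _ = β₀ * 1 := by rw [ENNReal.mul_inv_cancel hβ₀c ENNReal.coe_ne_top]
        _ = β₀ := mul_one _
    have hsmall : φ y ((β₀ * β₀ * tn : ℝ≥0)) ≤ 1 :=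
      le_trans (hyMono hyΩ hcoele) (hyA0 hyΩ).1
    set u : ℝ≥0 := β₂ * (β₀ * β₀ * tn) with hu
    have hu0 : u ≠ 0 := by simp [hu, hβ₂0.ne', hβ₀pos.ne', htn0]
    have hA2' : φ x (u : ℝ≥0∞) ≤ φ y (f y) + (h x : ℝ≥0∞) + (h y : ℝ≥0∞) := by
      refine le_trans (hyA2 hxΩ hyΩ (β₀ * β₀ * tn) hsmall) ?_
      gcongr
      refine hyMono hyΩ ?_
      rw [← htcoe]
      push_cast
      calc (β₀ : ℝ≥0∞) * β₀ * tn ≤ 1 * 1 * tn := by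
            gcongr <;> exact_mod_cast hβ₀le
        _ = tn := by ring
    have hsu : θ * u < u := mul_lt_of_lt_one_left (pos_iff_ne_zero.2 hu0) hθ1
    have hinc1 := hxInc hxΩ (θ * u) u (by positivity) hsu
    have hucoe0 : (0 : ℝ≥0∞) < (u : ℝ≥0∞) := by
      exact_mod_cast pos_iff_ne_zero.2 hu0
    have hsucoe0 : (0 : ℝ≥0∞) < ((θ * u : ℝ≥0) : ℝ≥0∞) := by
      exact_mod_cast pos_iff_ne_zero.2 (mul_ne_zero hθ0 hu0)
    have hup0 : ((u : ℝ≥0∞)) ^ p ≠ 0 :=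
      (ENNReal.rpow_pos hucoe0 ENNReal.coe_ne_top).ne'
    have hupt : ((u : ℝ≥0∞)) ^ p ≠ ∞ :=
      ENNReal.rpow_ne_top_of_nonneg hp0.le ENNReal.coe_ne_top
    have hsp0 : (((θ * u : ℝ≥0) : ℝ≥0∞)) ^ p ≠ 0 :=
      (ENNReal.rpow_pos hsucoe0 ENNReal.coe_ne_top).ne'
    have hspt : (((θ * u : ℝ≥0) : ℝ≥0∞)) ^ p ≠ ∞ :=
      ENNReal.rpow_ne_top_of_nonneg hp0.le ENNReal.coe_ne_top
    have hθp : θ ^ (p : ℝ) = c3⁻¹ := by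
      rw [hθ, ← NNReal.rpow_mul, one_div_mul_cancel hp0.ne', NNReal.rpow_one]
    have h5 : (a : ℝ≥0∞) * ((θ : ℝ≥0∞)) ^ p = (3 : ℝ≥0∞)⁻¹ := by
      rw [← ENNReal.coe_rpow_of_nonneg θ hp0.le, ← ENNReal.coe_mul, hθp]
      rw [show a * c3⁻¹ = 3⁻¹ by
        rw [hc3, mul_inv, mul_comm (3 : ℝ≥0)⁻¹ a⁻¹, ← mul_assoc,
          mul_inv_cancel₀ ha0, one_mul]]
      rw [ENNReal.coe_inv (by norm_num)]
      norm_num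
    have hstep : φ x ((θ * u : ℝ≥0)) ≤ (3 : ℝ≥0∞)⁻¹ * (φ y (f y) + h x + h y) := by
      have h1 : φ x ((θ * u : ℝ≥0)) ≤
          (a : ℝ≥0∞) * (φ x u / (u : ℝ≥0∞) ^ p) * (((θ * u : ℝ≥0) : ℝ≥0∞)) ^ p :=
        (ENNReal.div_le_iff hsp0 hspt).1 hinc1
      have h2 : (((θ * u : ℝ≥0) : ℝ≥0∞)) ^ p = ((θ : ℝ≥0∞)) ^ p * ((u : ℝ≥0∞)) ^ p := by
        push_cast
        exact ENNReal.mul_rpow_of_nonneg _ _ hp0.le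
      calc φ x ((θ * u : ℝ≥0))
          ≤ (a : ℝ≥0∞) * (φ x u / (u : ℝ≥0∞) ^ p) * (((θ * u : ℝ≥0) : ℝ≥0∞)) ^ p := h1
        _ = (a : ℝ≥0∞) * ((θ : ℝ≥0∞)) ^ p * (φ x u / (u : ℝ≥0∞) ^ p * ((u : ℝ≥0∞)) ^ p) := by
            rw [h2]; ring
        _ = (3 : ℝ≥0∞)⁻¹ * (φ x u) := by
            rw [h5, ENNReal.div_mul_cancel hup0 hupt]
        _ ≤ (3 : ℝ≥0∞)⁻¹ * (φ y (f y) + h x + h y) := by gcongr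
    have harg : (β₃ : ℝ≥0∞) * f y = ((θ * u : ℝ≥0) : ℝ≥0∞) := by
      rw [← htcoe, ← ENNReal.coe_mul]
      congr 1
      rw [hβ₃, hu]; ring
    rw [harg]
    calc (φ x ((θ * u : ℝ≥0) : ℝ≥0∞)) ^ (1 / p)
        ≤ ((3 : ℝ≥0∞)⁻¹ * (φ y (f y) + h x + h y)) ^ (1 / p) :=
          ENNReal.rpow_le_rpow hstep hp0'.le
      _ ≤ (φ y (f y)) ^ (1 / p) + (h x : ℝ≥0∞) ^ (1 / p) + (h y : ℝ≥0∞) ^ (1 / p) :=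
          third_rpow_le _ _ _ hp0'.le
  -- the (aInc)_1 cross inequality for ψ = (φ x ·)^(1/p)
  have hinc' : ∀ s t : ℝ≥0∞, 0 < s → s < t → t ≠ ∞ →
      t * (φ x s) ^ (1 / p) ≤ (a' : ℝ≥0∞) * s * (φ x t) ^ (1 / p) := by
    intro s t hs hst htne
    have hsne : s ≠ ∞ := (hst.trans (lt_top_iff_ne_top.2 htne)).ne
    lift s to ℝ≥0 using hsne with sn
    lift t to ℝ≥0 using htne with tn
    have hs0 : sn ≠ 0 := by exact_mod_cast hs.ne'
    have hstn : sn < tn := by exact_mod_cast hst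
    have h0 := hxInc hxΩ sn tn (pos_iff_ne_zero.2 hs0) hstn
    have h1 : (φ x sn) ^ (1 / p) / (sn : ℝ≥0∞) ≤
        (a' : ℝ≥0∞) * ((φ x tn) ^ (1 / p) / (tn : ℝ≥0∞)) := by
      have hr := ENNReal.rpow_le_rpow h0 hp0'.le
      rwa [ENNReal.div_rpow_of_nonneg _ _ hp0'.le,
        ENNReal.mul_rpow_of_nonneg _ _ hp0'.le,
        ENNReal.div_rpow_of_nonneg _ _ hp0'.le,
        ← ENNReal.rpow_mul, ← ENNReal.rpow_mul,
        mul_one_div_cancel hp0.ne', ENNReal.rpow_one, ENNReal.rpow_one,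
        ← ENNReal.coe_rpow_of_nonneg a hp0'.le] at hr
    have h2 : (φ x sn) ^ (1 / p) ≤
        (a' : ℝ≥0∞) * ((φ x tn) ^ (1 / p) / (tn : ℝ≥0∞)) * (sn : ℝ≥0∞) :=
      (ENNReal.div_le_iff (by exact_mod_cast hs0) ENNReal.coe_ne_top).1 h1
    calc (tn : ℝ≥0∞) * (φ x sn) ^ (1 / p)
        ≤ (tn : ℝ≥0∞) * ((a' : ℝ≥0∞) * ((φ x tn) ^ (1 / p) / (tn : ℝ≥0∞)) * sn) := by gcongr
      _ = (a' : ℝ≥0∞) * sn * ((tn : ℝ≥0∞) * ((φ x tn) ^ (1 / p) / (tn : ℝ≥0∞))) := by ring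
      _ ≤ (a' : ℝ≥0∞) * sn * (φ x tn) ^ (1 / p) := by
          gcongr
          exact ENNReal.mul_div_le
  have hψ0 : (φ x 0) ^ (1 / p) = 0 := by
    rw [hxZero hxΩ, ENNReal.zero_rpow_of_pos hp0']
  set F := ∫⁻ y in S, f y with hF
  have hWcond : 4 * (a' : ℝ≥0∞) ^ 2 * (((β₃ / d : ℝ≥0) : ℝ≥0∞) * V⁻¹ * F) ≤
      V⁻¹ * ∫⁻ y in S, (β₃ : ℝ≥0∞) * f y := by
    rw [lintegral_const_mul _ hf, ← hF]
    have hdc : (4 : ℝ≥0∞) * ((a' : ℝ≥0∞)) ^ 2 = (d : ℝ≥0∞) := by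
      rw [hd]; push_cast; ring
    rw [hdc]
    have hmul : ((d : ℝ≥0∞)) * ((β₃ / d : ℝ≥0) : ℝ≥0∞) ≤ (β₃ : ℝ≥0∞) := by
      rw [← ENNReal.coe_mul]
      refine ENNReal.coe_le_coe.2 (le_of_eq ?_)
      rw [mul_comm]
      exact div_mul_cancel₀ β₃ hd0
    calc (d : ℝ≥0∞) * (((β₃ / d : ℝ≥0) : ℝ≥0∞) * V⁻¹ * F)
        = ((d : ℝ≥0∞) * ((β₃ / d : ℝ≥0) : ℝ≥0∞)) * (V⁻¹ * F) := by ring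
      _ ≤ (β₃ : ℝ≥0∞) * (V⁻¹ * F) := by gcongr
      _ = V⁻¹ * ((β₃ : ℝ≥0∞) * F) := by ring
  have hJ := jensen_aInc volume S hSmeas V hV0 hVt
    (by rw [hV, hS]; exact measure_mono Set.inter_subset_left)
    (fun v => (φ x v) ^ (1 / p)) hψ0 (a' : ℝ≥0∞) (by exact_mod_cast ha'1)
    ENNReal.coe_ne_top hinc' (fun y => (β₃ : ℝ≥0∞) * f y) (hf.const_mul _)
    ((β₃ : ℝ≥0∞) * (β₀ : ℝ≥0∞)⁻¹)
    (ENNReal.mul_ne_top ENNReal.coe_ne_top hβ₀invt)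
    (fun y => mul_le_mul_right (hfle y) _)
    (((β₃ / d : ℝ≥0) : ℝ≥0∞) * V⁻¹ * F) hWcond
  have hmeasA : Measurable fun y => (φ y (f y)) ^ (1 / p) :=
    (hφ.meas f hf).pow_const _
  have hmeasC : Measurable fun y : Rn n => ((h y : ℝ≥0∞)) ^ (1 / p) :=
    hh.1.coe_nnreal_ennreal.pow_const _
  calc (φ x (((β₃ / d : ℝ≥0) : ℝ≥0∞) * V⁻¹ * F)) ^ (1 / p)
      ≤ V⁻¹ * ∫⁻ y in S, (φ x ((β₃ : ℝ≥0∞) * f y)) ^ (1 / p) := hJ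
    _ ≤ V⁻¹ * ∫⁻ y in S, ((φ y (f y)) ^ (1 / p) + (h x : ℝ≥0∞) ^ (1 / p)
          + (h y : ℝ≥0∞) ^ (1 / p)) :=
        mul_le_mul_right (lintegral_mono_ae ((ae_restrict_iff' hSmeas).2 hkey)) _
    _ = V⁻¹ * ((∫⁻ y in S, (φ y (f y)) ^ (1 / p)) + (h x : ℝ≥0∞) ^ (1 / p) * volume S
          + ∫⁻ y in S, (h y : ℝ≥0∞) ^ (1 / p)) := by
        rw [lintegral_add_right _ hmeasC, lintegral_add_right _ measurable_const,
          setLIntegral_const]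
    _ = V⁻¹ * (∫⁻ y in S, (φ y (f y)) ^ (1 / p))
          + V⁻¹ * ((h x : ℝ≥0∞) ^ (1 / p) * volume S)
          + V⁻¹ * ∫⁻ y in S, (h y : ℝ≥0∞) ^ (1 / p) := by ring
    _ ≤ V⁻¹ * (∫⁻ y in S, (φ y (f y)) ^ (1 / p)) + (h x : ℝ≥0∞) ^ (1 / p)
          + V⁻¹ * ∫⁻ y in S, (h y : ℝ≥0∞) ^ (1 / p) := by
        gcongr ?_ + ?_ + ?_
        · exact le_rfl
        · calc V⁻¹ * ((h x : ℝ≥0∞) ^ (1 / p) * volume S)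
              = (h x : ℝ≥0∞) ^ (1 / p) * (V⁻¹ * volume S) := by ring
            _ ≤ (h x : ℝ≥0∞) ^ (1 / p) * (V⁻¹ * V) :=
                mul_le_mul_right (mul_le_mul_right
                  (by rw [hV, hS]; exact measure_mono Set.inter_subset_left) _) _
            _ = (h x : ℝ≥0∞) ^ (1 / p) * 1 := by
                rw [ENNReal.inv_mul_cancel hV0 hVt]
            _ = (h x : ℝ≥0∞) ^ (1 / p) := mul_one _
        · exact le_rfl
end
end
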